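/- arXiv:2206.10420 — 2 statements merged into one kernel-verified Lean document; each statement's English description precedes it below -/
import Mathlib

section
/- Let (s,v) and (t,w) be MacLane clusters for f, and set s∧t = D_{v∧w} ∩ R. Then (s∧t, v∧w) is a MacLane cluster for f, and it is the smallest MacLane cluster containing both (s,v) and (t,w): any MacLane cluster (u,z) with z ≤ v and z ≤ w satisfies z ≤ v∧w. -/
open Polynomial
open scoped Classical

noncomputable section

/-- The value monoid `ℚ ∪ {∞}`. -/
abbrev Qinf : Type := WithTop ℚ

/-- A pseudo-valuation on a commutative ring `A`, with values in `ℚ ∪ {∞}`: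
`v (a*b) = v a + v b` and `v (a+b) ≥ min (v a) (v b)`. -/
structure IsPseudoVal {A : Type*} [CommRing A] (v : A → Qinf) : Prop where
  map_mul : ∀ a b : A, v (a * b) = v a + v b
  min_le_map_add : ∀ a b : A, min (v a) (v b) ≤ v (a + b)

variable {K : Type*} [Field K]

/-- `vK` is a normalised discrete valuation on the field `K`. -/
structure IsNormDiscreteVal (vK : K → Qinf) : Prop where
  pseudo : IsPseudoVal vK
  top_iff : ∀ a : K, vK a = ⊤ ↔ a = 0
  int_valued : ∀ a : K, a ≠ 0 → ∃ n : ℤ, vK a = ((n : ℚ) : Qinf)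
  normalised : ∃ π : K, vK π = ((1 : ℚ) : Qinf)

/-- `K` is complete with respect to the valuation `vK`:
every Cauchy sequence (for `vK`) converges. -/
def IsCompleteVal (vK : K → Qinf) : Prop :=
  ∀ s : ℕ → K,
    (∀ M : ℚ, ∃ N : ℕ, ∀ m, N ≤ m → ∀ n, N ≤ n → ((M : ℚ) : Qinf) ≤ vK (s m - s n)) →
    ∃ a : K, ∀ M : ℚ, ∃ N : ℕ, ∀ n, N ≤ n → ((M : ℚ) : Qinf) ≤ vK (s n - a)

/-- The Gauss valuation on `K[x]`: `v₀ (∑ aᵢ xⁱ) = minᵢ vK aᵢ`. -/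
def gaussVal (vK : K → Qinf) (g : Polynomial K) : Qinf :=
  g.support.inf fun i => vK (g.coeff i)

/-- `g ≈_v h` : `g` is `v`-equivalent to `h`, i.e. `v (g - h) > v g`. -/
def VEquiv (v : Polynomial K → Qinf) (g h : Polynomial K) : Prop :=
  v g < v (g - h)

/-- `h |_v g` : `g` is `v`-divisible by `h`, i.e. `g ≈_v q * h` for some `q`. -/
def VDvd (v : Polynomial K → Qinf) (h g : Polynomial K) : Prop :=
  ∃ q : Polynomial K, VEquiv v g (q * h)

/-- `φ` is `v`-irreducible. -/
def VIrreducible (v : Polynomial K → Qinf) (φ : Polynomial K) : Prop :=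
  ∀ a b : Polynomial K, VDvd v φ (a * b) → VDvd v φ a ∨ VDvd v φ b

/-- `φ` is `v`-minimal: whatever `φ` `v`-divides has degree at least `deg φ`. -/
def VMinimal (v : Polynomial K → Qinf) (φ : Polynomial K) : Prop :=
  ∀ a : Polynomial K, VDvd v φ a → φ.natDegree ≤ a.natDegree

/-- `φ` is a key polynomial over `v`. -/
def IsKeyPoly (v : Polynomial K → Qinf) (φ : Polynomial K) : Prop :=
  φ.Monic ∧ VIrreducible v φ ∧ VMinimal v φ

/-- Auxiliary fuelled definition of the augmented pseudo-valuation. -/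
def augValAux (v : Polynomial K → Qinf) (φ : Polynomial K) (lam : Qinf) :
    ℕ → Polynomial K → Qinf
  | 0, _ => ⊤
  | n + 1, g =>
      if g = 0 then ⊤ else min (v (g %ₘ φ)) (lam + augValAux v φ lam n (g /ₘ φ))

/-- The augmentation `w = [v, w(φ) = λ]`, defined by
`w (∑ aᵢ φ^i) = minᵢ (v aᵢ + i•λ)` on `φ`-adic expansions with `deg aᵢ < deg φ`. -/
def augVal (v : Polynomial K → Qinf) (φ : Polynomial K) (lam : Qinf)
    (g : Polynomial K) : Qinf :=
  augValAux v φ lam (g.natDegree + 1) g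

/-- MacLane pseudo-valuations on `K[x]`: obtained from the Gauss valuation by
finitely many augmentations by key polynomials. -/
inductive IsMacLane (vK : K → Qinf) : (Polynomial K → Qinf) → Prop
  | gauss : IsMacLane vK (gaussVal vK)
  | aug {v : Polynomial K → Qinf} {φ : Polynomial K} {lam : Qinf} :
      IsMacLane vK v → IsKeyPoly v φ → v φ < lam → IsMacLane vK (augVal v φ lam)

/-- MacLane valuations: MacLane pseudo-valuations which are valuations. -/
def IsMacLaneVal (vK : K → Qinf) (v : Polynomial K → Qinf) : Prop :=
  IsMacLane vK v ∧ ∀ g : Polynomial K, v g = ⊤ → g = 0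

/-- `φ` is a centre of the MacLane pseudo-valuation `w`: the last key polynomial of
an augmentation chain for `w` (for the Gauss valuation: any monic integral degree 1
polynomial). -/
def IsCentre (vK : K → Qinf) (w : Polynomial K → Qinf) (φ : Polynomial K) : Prop :=
  (w = gaussVal vK ∧ φ.Monic ∧ φ.natDegree = 1 ∧ ∀ i : ℕ, 0 ≤ vK (φ.coeff i)) ∨
  ∃ (v : Polynomial K → Qinf) (lam : Qinf),
    IsMacLane vK v ∧ IsKeyPoly v φ ∧ v φ < lam ∧ w = augVal v φ lam

/-- `r` is the radius `λ_w` of the MacLane pseudo-valuation `w`. -/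
def HasRadius (vK : K → Qinf) (w : Polynomial K → Qinf) (r : Qinf) : Prop :=
  (w = gaussVal vK ∧ r = 0) ∨
  ∃ (v : Polynomial K → Qinf) (φ : Polynomial K),
    IsMacLane vK v ∧ IsKeyPoly v φ ∧ v φ < r ∧ w = augVal v φ r

/-- `d` is the degree `deg w` of the MacLane pseudo-valuation `w`. -/
def HasMLDegree (vK : K → Qinf) (w : Polynomial K → Qinf) (d : ℕ) : Prop :=
  (w = gaussVal vK ∧ d = 1) ∨
  ∃ (v : Polynomial K → Qinf) (φ : Polynomial K) (lam : Qinf),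
    IsMacLane vK v ∧ IsKeyPoly v φ ∧ v φ < lam ∧ w = augVal v φ lam ∧
      φ.natDegree = d

variable {Kb : Type*} [Field Kb] [Algebra K Kb]

/-- `vbar` is an extension of `vK` to `Kb`. -/
structure IsExtVal (vK : K → Qinf) (vbar : Kb → Qinf) : Prop where
  pseudo : IsPseudoVal vbar
  top_iff : ∀ a : Kb, vbar a = ⊤ ↔ a = 0
  extends_vK : ∀ a : K, vbar (algebraMap K Kb a) = vK a

/-- The discoid `D(g, λ) = {α : v_K(g(α)) ≥ λ}`. -/
def discoidSet (vbar : Kb → Qinf) (g : Polynomial K) (lam : Qinf) : Set Kb :=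
  {α : Kb | lam ≤ vbar (Polynomial.aeval α g)}

/-- `D` is a discoid: `D = D(g, λ)` for some monic irreducible `g` and some `λ`. -/
def IsDiscoid (vbar : Kb → Qinf) (D : Set Kb) : Prop :=
  ∃ (g : Polynomial K) (lam : Qinf), g.Monic ∧ Irreducible g ∧
    D = discoidSet vbar g lam

/-- The set `D_v = {α : v_K(g(α)) ≥ v g for all g}` associated to `v`. -/
def Dset (vbar : Kb → Qinf) (v : Polynomial K → Qinf) : Set Kb :=
  {α : Kb | ∀ g : Polynomial K, v g ≤ vbar (Polynomial.aeval α g)}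

/-- The set of roots of `f` in `Kb`. -/
def rootSetOf (f : Polynomial K) : Set Kb :=
  {α : Kb | Polynomial.aeval α f = 0}

/-- `(s, v)` is a MacLane cluster for `f`. -/
def IsMLCluster (vK : K → Qinf) (vbar : Kb → Qinf) (f : Polynomial K)
    (s : Set Kb) (v : Polynomial K → Qinf) : Prop :=
  IsMacLane vK v ∧ s.Nonempty ∧ s = Dset vbar v ∩ rootSetOf f ∧
  ∀ w : Polynomial K → Qinf, IsMacLane vK w → v < w →
    s = Dset vbar w ∩ rootSetOf f →
    ∀ dv dw : ℕ, HasMLDegree vK v dv → HasMLDegree vK w dw → dv < dw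

/-- The `i`-th coefficient `aᵢ` of the `φ`-adic expansion `g = ∑ aᵢ φ^i`. -/
def phiCoeff (φ : Polynomial K) : ℕ → Polynomial K → Polynomial K
  | 0, g => g %ₘ φ
  | n + 1, g => phiCoeff φ n (g /ₘ φ)

/-- The right endpoint `i_w` of `L_w(f)`, for `w = [v, w(φ) = λ]`. -/
def iEnd (v : Polynomial K → Qinf) (φ : Polynomial K) (lam : Qinf)
    (f : Polynomial K) : ℕ :=
  if lam = ⊤ then sInf {i : ℕ | phiCoeff φ i f ≠ 0}
  else sSup {i : ℕ | v (phiCoeff φ i f) + i • lam = augVal v φ lam f}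

/-- The left endpoint `i⁰_w` of `L_w(f)`, for `w = [v, w(φ) = λ]`. -/
def iStart (v : Polynomial K → Qinf) (φ : Polynomial K) (lam : Qinf)
    (f : Polynomial K) : ℕ :=
  if lam = ⊤ then 0
  else sInf {i : ℕ | v (phiCoeff φ i f) + i • lam = augVal v φ lam f}

end

/-- `m` is the meet `v ∧ w` of the MacLane pseudo-valuations `v` and `w`. -/
def IsMLMeet {K : Type*} [Field K] (vK : K → Qinf)
    (v w m : Polynomial K → Qinf) : Prop :=
  IsMacLane vK m ∧ m ≤ v ∧ m ≤ w ∧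
  ∀ z : Polynomial K → Qinf, IsMacLane vK z → z ≤ v → z ≤ w → z ≤ m

namespace MLAux

/-! ### Qinf helpers -/

lemma qinf_self_add {a : Qinf} (h : a + a = a) (ha : a ≠ ⊤) : a = 0 := by
  induction a using WithTop.recTopCoe with
  | top => exact absurd rfl ha
  | coe q =>
    have : ((q + q : ℚ) : Qinf) = ((q : ℚ) : Qinf) := by push_cast; exact h
    have hq : q + q = q := by exact_mod_cast this
    have : q = 0 := by linarith
    simp [this]

lemma qinf_add_min (a b c : Qinf) : a + min b c = min (a + b) (a + c) := by
  rcases le_total b c with h | h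
  · rw [min_eq_left h, min_eq_left (add_le_add_right h a)]
  · rw [min_eq_right h, min_eq_right (add_le_add_right h a)]

lemma qinf_min_add (a b c : Qinf) : min a b + c = min (a + c) (b + c) := by
  rw [add_comm, qinf_add_min, add_comm c a, add_comm c b]

lemma qinf_nsmul_ne_top {a : Qinf} (ha : a ≠ ⊤) (k : ℕ) : k • a ≠ ⊤ := by
  induction k with
  | zero => simp
  | succ n ih => rw [succ_nsmul]; exact WithTop.add_ne_top.mpr ⟨ih, ha⟩

lemma add_finset_inf {ι : Type*} (a : Qinf) (s : Finset ι) (f : ι → Qinf) :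
    a + s.inf f = s.inf (fun i => a + f i) := by
  induction s using Finset.cons_induction with
  | empty => simp
  | cons b s hb ih => rw [Finset.inf_cons, Finset.inf_cons, qinf_add_min, ih]

lemma inf_range_succ' (n : ℕ) (F : ℕ → Qinf) :
    (Finset.range (n + 1)).inf F = min (F 0) ((Finset.range n).inf (fun k => F (k + 1))) := by
  induction n with
  | zero => simp
  | succ m ih =>
    rw [Finset.range_add_one, Finset.inf_insert, ih, Finset.range_add_one, Finset.inf_insert]
    rw [← min_assoc, min_comm (F (m+1)) (F 0), min_assoc]

/-! ### abstract superadditive maps -/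

section abstractv
variable {A : Type*} [CommRing A] {v : A → Qinf}

lemma superadd_sum (h0 : v 0 = ⊤) (hadd : ∀ a b, min (v a) (v b) ≤ v (a + b))
    {ι : Type*} (s : Finset ι) (t : ι → A) :
    s.inf (fun i => v (t i)) ≤ v (∑ i ∈ s, t i) := by
  induction s using Finset.cons_induction with
  | empty => simp [h0]
  | cons b s hb ih =>
    rw [Finset.sum_cons, Finset.inf_cons]
    exact le_trans (min_le_min (le_refl _) ih) (hadd _ _)

lemma eq_of_add (hadd : ∀ a b, min (v a) (v b) ≤ v (a + b))
    (hneg : ∀ a, v (-a) = v a) {a b : A} (hb : v a < v b) : v (a + b) = v a := by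
  refine le_antisymm ?_ (le_trans (le_min (le_refl _) hb.le) (hadd a b))
  by_contra hc
  push_neg at hc
  have h2 : min (v (a + b)) (v (-b)) ≤ v ((a + b) + (-b)) := hadd _ _
  rw [hneg, add_neg_cancel_right] at h2
  exact absurd (lt_of_lt_of_le (lt_min hc hb) h2) (lt_irrefl _)

end abstractv

end MLAux

namespace MLAux2
open MLAux

variable {K : Type*} [Field K] {vK : K → Qinf}

/-- A "good valuation" on `K[x]`. -/
structure GV (vK : K → Qinf) (v : Polynomial K → Qinf) : Prop where
  superadd : ∀ a b : Polynomial K, min (v a) (v b) ≤ v (a + b)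
  mul : ∀ a b : Polynomial K, v (a * b) = v a + v b
  vC : ∀ c : K, v (Polynomial.C c) = vK c

section vKfacts
variable (hK : IsNormDiscreteVal vK)
include hK

lemma vK_zero : vK 0 = ⊤ := (hK.top_iff 0).mpr rfl

lemma vK_one : vK 1 = 0 := by
  have h := hK.pseudo.map_mul 1 1
  rw [mul_one] at h
  exact qinf_self_add h.symm (fun ht => one_ne_zero ((hK.top_iff 1).mp ht))

lemma vK_negone : vK (-1) = 0 := by
  have h := hK.pseudo.map_mul (-1) (-1)
  rw [neg_mul_neg, one_mul, vK_one hK] at h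
  rcases WithTop.ne_top_iff_exists.mp
    (show vK (-1) ≠ ⊤ from fun ht => (by norm_num : ¬((-1:K) = 0)) ((hK.top_iff _).mp ht))
    with ⟨q, hq⟩
  rw [← hq] at h ⊢
  have hq2 : q + q = 0 := by exact_mod_cast h.symm
  have : q = 0 := by linarith
  simp [this]

lemma vK_neg (a : K) : vK (-a) = vK a := by
  have : (-a) = (-1) * a := by ring
  rw [this, hK.pseudo.map_mul, vK_negone hK, zero_add]

end vKfacts

section GVfacts
variable (hK : IsNormDiscreteVal vK) {v : Polynomial K → Qinf} (hv : GV vK v)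
include hK hv

lemma GV.zero : v 0 = ⊤ := by
  have := hv.vC 0
  rw [map_zero] at this
  rw [this, vK_zero hK]

lemma GV.one : v 1 = 0 := by
  have := hv.vC 1
  rw [map_one] at this
  rw [this, vK_one hK]

lemma GV.neg (p : Polynomial K) : v (-p) = v p := by
  have : (-p) = Polynomial.C (-1) * p := by simp
  rw [this, hv.mul, hv.vC, vK_negone hK, zero_add]

lemma GV.pow (p : Polynomial K) (k : ℕ) : v (p ^ k) = k • v p := by
  induction k with
  | zero => rw [pow_zero, GV.one hK hv]; simp
  | succ n ih => rw [pow_succ, hv.mul, ih, succ_nsmul]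

lemma GV.sub_comm (a b : Polynomial K) : v (a - b) = v (b - a) := by
  rw [← GV.neg hK hv (a - b), neg_sub]

end GVfacts

/-! ### Gauss valuation facts -/

section gauss
variable (hK : IsNormDiscreteVal vK)
include hK

lemma gauss_le_coeff (g : Polynomial K) (i : ℕ) : gaussVal vK g ≤ vK (g.coeff i) := by
  by_cases h : i ∈ g.support
  · exact Finset.inf_le h
  · rw [Polynomial.notMem_support_iff.mp h, vK_zero hK]; exact le_top

lemma gauss_zero : gaussVal vK (0 : Polynomial K) = ⊤ := by
  simp [gaussVal]

lemma gauss_eq_top_iff {g : Polynomial K} : gaussVal vK g = ⊤ ↔ g = 0 := by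
  constructor
  · intro h
    by_contra hg
    obtain ⟨i, hi, hieq⟩ := Finset.exists_mem_eq_inf g.support
      (Polynomial.support_nonempty.mpr hg) (fun i => vK (g.coeff i))
    rw [gaussVal] at h
    rw [h] at hieq
    exact Polynomial.mem_support_iff.mp hi ((hK.top_iff _).mp hieq.symm)
  · rintro rfl; exact gauss_zero hK

lemma gauss_C (c : K) : gaussVal vK (Polynomial.C c) = vK c := by
  by_cases hc : c = 0
  · subst hc; rw [map_zero, gauss_zero hK, vK_zero hK]
  · rw [gaussVal, Polynomial.support_C hc]
    simp

lemma gauss_superadd (f g : Polynomial K) :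
    min (gaussVal vK f) (gaussVal vK g) ≤ gaussVal vK (f + g) := by
  apply Finset.le_inf
  intro i _
  rw [Polynomial.coeff_add]
  exact le_trans (min_le_min (gauss_le_coeff hK f i) (gauss_le_coeff hK g i))
    (hK.pseudo.min_le_map_add _ _)

lemma gauss_mul (f g : Polynomial K) :
    gaussVal vK (f * g) = gaussVal vK f + gaussVal vK g := by
  by_cases hf : f = 0
  · subst hf; rw [zero_mul, gauss_zero hK, top_add]
  by_cases hg : g = 0
  · subst hg; rw [mul_zero, gauss_zero hK, add_top]
  set F := gaussVal vK f with hF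
  set G := gaussVal vK g with hG
  have hFt : F ≠ ⊤ := fun h => hf ((gauss_eq_top_iff hK).mp h)
  have hGt : G ≠ ⊤ := fun h => hg ((gauss_eq_top_iff hK).mp h)
  -- ≥ direction
  have hge : F + G ≤ gaussVal vK (f * g) := by
    apply Finset.le_inf
    intro n _
    rw [Polynomial.coeff_mul]
    refine le_trans ?_ (superadd_sum (vK_zero hK) hK.pseudo.min_le_map_add _ _)
    apply Finset.le_inf
    rintro ⟨i, j⟩ _
    rw [hK.pseudo.map_mul]
    exact add_le_add (gauss_le_coeff hK f i) (gauss_le_coeff hK g j)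
  -- choose minimal indices
  have hfne : f.support.Nonempty := Polynomial.support_nonempty.mpr hf
  have hgne : g.support.Nonempty := Polynomial.support_nonempty.mpr hg
  have hSf : (f.support.filter (fun i => vK (f.coeff i) = F)).Nonempty := by
    obtain ⟨i, hi, hieq⟩ := Finset.exists_mem_eq_inf f.support hfne (fun i => vK (f.coeff i))
    exact ⟨i, Finset.mem_filter.mpr ⟨hi, hieq.symm⟩⟩
  have hSg : (g.support.filter (fun j => vK (g.coeff j) = G)).Nonempty := by
    obtain ⟨j, hj, hjeq⟩ := Finset.exists_mem_eq_inf g.support hgne (fun j => vK (g.coeff j))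
    exact ⟨j, Finset.mem_filter.mpr ⟨hj, hjeq.symm⟩⟩
  set i0 := (f.support.filter (fun i => vK (f.coeff i) = F)).min' hSf with hi0def
  set j0 := (g.support.filter (fun j => vK (g.coeff j) = G)).min' hSg with hj0def
  have hi0 : vK (f.coeff i0) = F :=
    (Finset.mem_filter.mp ((f.support.filter _).min'_mem hSf)).2
  have hj0 : vK (g.coeff j0) = G :=
    (Finset.mem_filter.mp ((g.support.filter _).min'_mem hSg)).2
  have hflt : ∀ i, i < i0 → F < vK (f.coeff i) := by
    intro i hi
    rcases lt_or_eq_of_le (gauss_le_coeff hK f i) with h | h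
    · exact h
    · exfalso
      have : i ∈ f.support.filter (fun i => vK (f.coeff i) = F) := by
        refine Finset.mem_filter.mpr ⟨?_, h.symm⟩
        rw [Polynomial.mem_support_iff]
        intro hz
        rw [hz, vK_zero hK] at h
        exact hFt h
      exact absurd (Finset.min'_le _ _ this) (not_le.mpr hi)
  have hglt : ∀ j, j < j0 → G < vK (g.coeff j) := by
    intro j hj
    rcases lt_or_eq_of_le (gauss_le_coeff hK g j) with h | h
    · exact h
    · exfalso
      have : j ∈ g.support.filter (fun j => vK (g.coeff j) = G) := by
        refine Finset.mem_filter.mpr ⟨?_, h.symm⟩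
        rw [Polynomial.mem_support_iff]
        intro hz
        rw [hz, vK_zero hK] at h
        exact hGt h
      exact absurd (Finset.min'_le _ _ this) (not_le.mpr hj)
  -- the coefficient at i0 + j0
  have hmem : (i0, j0) ∈ Finset.HasAntidiagonal.antidiagonal (i0 + j0) := by
    rw [Finset.HasAntidiagonal.mem_antidiagonal]
  have hsplit : (f * g).coeff (i0 + j0)
      = f.coeff i0 * g.coeff j0
        + ∑ p ∈ (Finset.HasAntidiagonal.antidiagonal (i0 + j0)).erase (i0, j0), f.coeff p.1 * g.coeff p.2 := by
    rw [Polynomial.coeff_mul, ← Finset.add_sum_erase _ _ hmem]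
  have hrest : F + G < vK (∑ p ∈ (Finset.HasAntidiagonal.antidiagonal (i0 + j0)).erase (i0, j0),
      f.coeff p.1 * g.coeff p.2) := by
    refine lt_of_lt_of_le ?_ (superadd_sum (vK_zero hK) hK.pseudo.min_le_map_add _ _)
    rw [Finset.lt_inf_iff (lt_of_le_of_ne le_top (WithTop.add_ne_top.mpr ⟨hFt, hGt⟩))]
    rintro ⟨i, j⟩ hij
    have hijsum : i + j = i0 + j0 := Finset.HasAntidiagonal.mem_antidiagonal.mp (Finset.mem_of_mem_erase hij)
    have hijne : (i, j) ≠ (i0, j0) := Finset.ne_of_mem_erase hij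
    rw [hK.pseudo.map_mul]
    rcases lt_or_ge i i0 with hlt | hle
    · exact WithTop.add_lt_add_of_lt_of_le hGt (hflt i hlt) (gauss_le_coeff hK g j)
    · have : j < j0 := by
        rcases lt_or_eq_of_le hle with h | h
        · omega
        · exfalso; apply hijne; subst h; simp at hijsum ⊢; omega
      exact WithTop.add_lt_add_of_le_of_lt hFt (gauss_le_coeff hK f i) (this |> hglt j)
  have hcoeff : vK ((f * g).coeff (i0 + j0)) = F + G := by
    rw [hsplit, eq_of_add hK.pseudo.min_le_map_add (vK_neg hK) (by rw [hK.pseudo.map_mul, hi0, hj0]; exact hrest), hK.pseudo.map_mul, hi0, hj0]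
  exact le_antisymm (le_trans (gauss_le_coeff hK (f * g) (i0 + j0)) hcoeff.le) hge

lemma gauss_GV : GV vK (gaussVal vK) :=
  ⟨gauss_superadd hK, gauss_mul hK, gauss_C hK⟩

end gauss
end MLAux2

namespace MLAux3
open MLAux MLAux2

variable {K : Type*} [Field K] {vK : K → Qinf}

/-! ### phiCoeff basics -/

section phiC
variable {φ : Polynomial K} (hm : φ.Monic) (hd : 1 ≤ φ.natDegree)

lemma phiCoeff_zero_poly : ∀ k, phiCoeff φ k (0 : Polynomial K) = 0 := by
  intro k
  induction k with
  | zero => simp [phiCoeff]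
  | succ n ih => rw [phiCoeff, Polynomial.zero_divByMonic]; exact ih

include hm hd in
lemma phiCoeff_natDegree_lt (k : ℕ) (p : Polynomial K) :
    (phiCoeff φ k p).natDegree < φ.natDegree := by
  induction k generalizing p with
  | zero =>
    by_cases hp : p %ₘ φ = 0
    · rw [phiCoeff, hp, Polynomial.natDegree_zero]; exact hd
    · rw [phiCoeff]
      exact Polynomial.natDegree_lt_natDegree hp (Polynomial.degree_modByMonic_lt p hm)
  | succ n ih => rw [phiCoeff]; exact ih _

include hm hd in
lemma divByMonic_natDegree_lt (p : Polynomial K) (hp : p ≠ 0) :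
    (p /ₘ φ).natDegree < p.natDegree ∨ p /ₘ φ = 0 := by
  by_cases h : p /ₘ φ = 0
  · exact Or.inr h
  · left
    rw [Polynomial.natDegree_divByMonic p hm]
    have : φ.natDegree ≤ p.natDegree := by
      by_contra hc
      push_neg at hc
      have : p.degree < φ.degree := by
        refine Polynomial.degree_lt_degree ?_
        exact hc
      exact h ((Polynomial.divByMonic_eq_zero_iff hm).mpr this)
    omega

include hm hd in
lemma phiCoeff_eq_zero {k : ℕ} {p : Polynomial K} (hk : p.natDegree < k) :
    phiCoeff φ k p = 0 := by
  induction k generalizing p with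
  | zero => omega
  | succ n ih =>
    by_cases hp : p = 0
    · subst hp; exact phiCoeff_zero_poly _
    rw [phiCoeff]
    rcases divByMonic_natDegree_lt hm hd p hp with h | h
    · exact ih (by omega)
    · rw [h]; exact phiCoeff_zero_poly _

include hm hd in
lemma phiCoeff_sum_eq (N : ℕ) : ∀ p : Polynomial K, p.natDegree < N →
    ∑ k ∈ Finset.range N, phiCoeff φ k p * φ ^ k = p := by
  induction N with
  | zero => omega
  | succ n ih =>
    intro p hp
    by_cases hp0 : p = 0
    · subst hp0
      refine Finset.sum_eq_zero ?_ |>.trans rfl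
      intro k _
      rw [phiCoeff_zero_poly, zero_mul]
    rw [Finset.sum_range_succ']
    have hstep : ∀ k, phiCoeff φ (k + 1) p = phiCoeff φ k (p /ₘ φ) := fun k => rfl
    by_cases hq : p /ₘ φ = 0
    · have h0 : ∀ k ∈ Finset.range n, phiCoeff φ (k+1) p * φ ^ (k+1) = 0 := by
        intro k _
        rw [hstep, hq, phiCoeff_zero_poly, zero_mul]
      rw [Finset.sum_eq_zero h0, zero_add]
      show p %ₘ φ * φ ^ 0 = p
      rw [pow_zero, mul_one]
      conv_rhs => rw [← Polynomial.modByMonic_add_div p φ]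
      rw [hq, mul_zero, add_zero]
    · have hdlt : (p /ₘ φ).natDegree < n := by
        rcases divByMonic_natDegree_lt hm hd p hp0 with h | h
        · -- need natDegree p/φ < n; from natDegree p ≤ n and drop ≥ 1
          rw [Polynomial.natDegree_divByMonic p hm] at h ⊢
          have hle : φ.natDegree ≤ p.natDegree := by
            by_contra hc
            push_neg at hc
            exact hq ((Polynomial.divByMonic_eq_zero_iff hm).mpr (Polynomial.degree_lt_degree hc))
          omega
        · exact absurd h hq
      have := ih (p /ₘ φ) hdlt
      calc ∑ k ∈ Finset.range n, phiCoeff φ (k+1) p * φ ^ (k+1) + phiCoeff φ 0 p * φ ^ 0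
          = (∑ k ∈ Finset.range n, phiCoeff φ k (p /ₘ φ) * φ ^ k) * φ + p %ₘ φ := by
            rw [Finset.sum_mul]
            congr 1
            · apply Finset.sum_congr rfl
              intro k _
              rw [hstep, pow_succ]; ring
            · show phiCoeff φ 0 p * φ ^ 0 = p %ₘ φ
              rw [pow_zero, mul_one]; rfl
        _ = p := by
            rw [this, mul_comm, add_comm]
            exact Polynomial.modByMonic_add_div p φ

include hm hd in
lemma phiCoeff_of_sum :
    ∀ (M : ℕ) (e : ℕ → Polynomial K), (∀ k, (e k).natDegree < φ.natDegree) →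
    ∀ (p : Polynomial K), (p = ∑ k ∈ Finset.range M, e k * φ ^ k) →
    ∀ k, k < M → phiCoeff φ k p = e k := by
  intro M
  induction M with
  | zero => omega
  | succ n ih =>
    intro e he p hp k hk
    have hsplit : p = e 0 + φ * (∑ j ∈ Finset.range n, e (j+1) * φ ^ j) := by
      rw [hp, Finset.sum_range_succ', pow_zero, mul_one, add_comm, Finset.mul_sum]
      congr 1
      apply Finset.sum_congr rfl
      intro j _
      rw [pow_succ]; ring
    have hdeg : (e 0).degree < φ.degree := by
      by_cases h0 : e 0 = 0
      · rw [h0, Polynomial.degree_zero, Polynomial.degree_eq_natDegree hm.ne_zero]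
        exact WithBot.bot_lt_coe _
      · exact Polynomial.degree_lt_degree (he 0)
    have huniq := Polynomial.div_modByMonic_unique (∑ j ∈ Finset.range n, e (j+1) * φ ^ j)
      (e 0) hm ⟨by rw [← hsplit], hdeg⟩
    match k with
    | 0 => show p %ₘ φ = e 0; exact huniq.2
    | (j+1) =>
      show phiCoeff φ j (p /ₘ φ) = e (j+1)
      rw [huniq.1]
      exact ih (fun k => e (k+1)) (fun k => he (k+1)) _ rfl j (by omega)

end phiC
end MLAux3

namespace MLAux4
open MLAux MLAux2 MLAux3

variable {K : Type*} [Field K] {vK : K → Qinf}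
variable {v : Polynomial K → Qinf} {φ : Polynomial K} {lam : Qinf}

lemma augValAux_zero_poly (n : ℕ) : augValAux v φ lam n (0 : Polynomial K) = ⊤ := by
  cases n with
  | zero => rfl
  | succ m => simp [augValAux]

section withGV
variable (hK : IsNormDiscreteVal vK) (hv : GV vK v) (hm : φ.Monic) (hd : 1 ≤ φ.natDegree)
include hK hv hm hd

lemma augValAux_eq : ∀ (n : ℕ) (p : Polynomial K), p.natDegree < n →
    augValAux v φ lam n p
      = (Finset.range n).inf (fun k => v (phiCoeff φ k p) + k • lam) := by
  intro n
  induction n with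
  | zero => omega
  | succ n ih =>
    intro p hp
    by_cases hp0 : p = 0
    · subst hp0
      rw [augValAux_zero_poly]
      refine (le_antisymm le_top (Finset.le_inf ?_)).symm
      intro k _
      rw [phiCoeff_zero_poly, GV.zero hK hv, top_add]
    have hlhs : augValAux v φ lam (n + 1) p
        = min (v (p %ₘ φ)) (lam + augValAux v φ lam n (p /ₘ φ)) := by
      simp [augValAux, hp0]
    rw [hlhs, inf_range_succ']
    have hF0 : v (phiCoeff φ 0 p) + (0 : ℕ) • lam = v (p %ₘ φ) := by
      simp [phiCoeff]
    rw [hF0]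
    congr 1
    by_cases hq : p /ₘ φ = 0
    · rw [hq, augValAux_zero_poly, add_top]
      refine (le_antisymm le_top (Finset.le_inf ?_)).symm
      intro k _
      rw [show phiCoeff φ (k+1) p = phiCoeff φ k (p /ₘ φ) from rfl, hq, phiCoeff_zero_poly,
        GV.zero hK hv, top_add]
    · have hle : φ.natDegree ≤ p.natDegree := by
        by_contra hc
        push_neg at hc
        exact hq ((Polynomial.divByMonic_eq_zero_iff hm).mpr (Polynomial.degree_lt_degree hc))
      have hlt : (p /ₘ φ).natDegree < n := by
        rw [Polynomial.natDegree_divByMonic p hm]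
        omega
      rw [ih _ hlt, add_finset_inf]
      apply Finset.inf_congr rfl
      intro k _
      show lam + (v (phiCoeff φ k (p /ₘ φ)) + k • lam)
          = v (phiCoeff φ (k+1) p) + (k+1) • lam
      have : phiCoeff φ (k+1) p = phiCoeff φ k (p /ₘ φ) := rfl
      rw [this, succ_nsmul]
      rw [add_comm lam _, add_assoc]

lemma augVal_eq_inf (p : Polynomial K) :
    augVal v φ lam p
      = (Finset.range (p.natDegree + 1)).inf (fun k => v (phiCoeff φ k p) + k • lam) :=
  augValAux_eq hK hv hm hd _ p (Nat.lt_succ_self _)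

lemma augVal_eq_inf' (p : Polynomial K) (N : ℕ) (hN : p.natDegree < N) :
    augVal v φ lam p
      = (Finset.range N).inf (fun k => v (phiCoeff φ k p) + k • lam) := by
  rw [augVal_eq_inf hK hv hm hd]
  apply le_antisymm
  · apply Finset.le_inf
    intro k hk
    by_cases h : k < p.natDegree + 1
    · exact Finset.inf_le (Finset.mem_range.mpr h)
    · push_neg at h
      have : phiCoeff φ k p = 0 := phiCoeff_eq_zero hm hd (by omega)
      rw [this, GV.zero hK hv, top_add]
      exact le_top
  · exact Finset.inf_mono (Finset.range_subset_range.mpr (by omega))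

lemma aug_le_term (p : Polynomial K) (k : ℕ) :
    augVal v φ lam p ≤ v (phiCoeff φ k p) + k • lam := by
  by_cases h : k < p.natDegree + 1
  · rw [augVal_eq_inf hK hv hm hd]
    exact Finset.inf_le (Finset.mem_range.mpr h)
  · push_neg at h
    rw [phiCoeff_eq_zero hm hd (by omega), GV.zero hK hv, top_add]
    exact le_top

end withGV

section Elem
variable (hK : IsNormDiscreteVal vK) (hv : GV vK v)
include hK hv

lemma E_lemma {g : Polynomial K}
    (hW : ∀ p : Polynomial K, p.natDegree < g.natDegree → ¬ VDvd v g p)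
    (c Q : Polynomial K) (hc : c.natDegree < g.natDegree) :
    v (c + Q * g) = min (v c) (v (Q * g)) := by
  refine le_antisymm ?_ (hv.superadd _ _)
  by_contra hcon
  push_neg at hcon
  rcases le_or_gt (v c) (v (Q * g)) with h | h
  · have hmin : min (v c) (v (Q * g)) = v c := min_eq_left h
    rw [hmin] at hcon
    refine hW c hc ⟨-Q, ?_⟩
    show v c < v (c - (-Q) * g)
    have : c - (-Q) * g = c + Q * g := by ring
    rw [this]
    exact hcon
  · have hmin : min (v c) (v (Q * g)) = v (Q * g) := min_eq_right h.le
    rw [hmin] at hcon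
    have h2 : min (v (c + Q * g)) (v (-c)) ≤ v ((c + Q * g) + (-c)) := hv.superadd _ _
    rw [GV.neg hK hv, show (c + Q * g) + (-c) = Q * g from by ring] at h2
    exact absurd (lt_of_lt_of_le (lt_min hcon h) h2) (lt_irrefl _)

end Elem

section augMore
variable (hK : IsNormDiscreteVal vK) (hv : GV vK v) (hm : φ.Monic) (hd : 1 ≤ φ.natDegree)
include hK hv hm hd

omit hK hv hm hd in
lemma aug_zero : augVal v φ lam (0 : Polynomial K) = ⊤ := augValAux_zero_poly _

lemma aug_low (p : Polynomial K) (hp : p.natDegree < φ.natDegree) :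
    augVal v φ lam p = v p := by
  by_cases hp0 : p = 0
  · subst hp0; rw [aug_zero, GV.zero hK hv]

  have hmod : p %ₘ φ = p :=
    (Polynomial.modByMonic_eq_self_iff hm).mpr (Polynomial.degree_lt_degree hp)
  have hdiv : p /ₘ φ = 0 :=
    (Polynomial.divByMonic_eq_zero_iff hm).mpr (Polynomial.degree_lt_degree hp)
  rw [augVal_eq_inf hK hv hm hd]
  apply le_antisymm
  · refine le_trans (Finset.inf_le (Finset.mem_range.mpr (by omega : 0 < p.natDegree + 1))) ?_
    show v (phiCoeff φ 0 p) + (0:ℕ) • lam ≤ v p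
    simp [phiCoeff, hmod]
  · apply Finset.le_inf
    intro k _
    match k with
    | 0 => show v p ≤ v (phiCoeff φ 0 p) + (0:ℕ) • lam; simp [phiCoeff, hmod]
    | (j+1) =>
      show v p ≤ v (phiCoeff φ j (p /ₘ φ)) + (j+1) • lam
      rw [hdiv, phiCoeff_zero_poly, GV.zero hK hv, top_add]
      exact le_top

lemma aug_phi : augVal v φ lam φ = lam := by
  have hself := Polynomial.div_modByMonic_unique (f := φ) 1 0 hm
    ⟨by rw [mul_one, zero_add], by
      rw [Polynomial.degree_zero, Polynomial.degree_eq_natDegree hm.ne_zero]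
      exact WithBot.bot_lt_coe _⟩
  have h0 : phiCoeff φ 0 φ = 0 := by show φ %ₘ φ = 0; exact hself.2
  have hdiv : φ /ₘ φ = 1 := hself.1
  have h1 : phiCoeff φ 1 φ = 1 := by
    show phiCoeff φ 0 (φ /ₘ φ) = 1
    rw [hdiv]
    show (1 : Polynomial K) %ₘ φ = 1
    refine (Polynomial.modByMonic_eq_self_iff hm).mpr ?_
    rw [Polynomial.degree_one, Polynomial.degree_eq_natDegree hm.ne_zero]
    exact_mod_cast (by omega : (0:ℕ) < φ.natDegree)
  have hk : ∀ j, phiCoeff φ (j+2) φ = 0 := by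
    intro j
    show phiCoeff φ j ((φ /ₘ φ) /ₘ φ) = 0
    rw [hdiv, (Polynomial.divByMonic_eq_zero_iff hm).mpr (by
      rw [Polynomial.degree_one, Polynomial.degree_eq_natDegree hm.ne_zero]
      exact_mod_cast (by omega : (0:ℕ) < φ.natDegree)), phiCoeff_zero_poly]
  apply le_antisymm
  · refine le_trans (aug_le_term hK hv hm hd φ 1) ?_
    rw [h1, GV.one hK hv, zero_add, one_nsmul]
  · rw [augVal_eq_inf hK hv hm hd]
    apply Finset.le_inf
    intro k _
    match k with
    | 0 => rw [h0, GV.zero hK hv, top_add]; exact le_top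
    | 1 => rw [h1, GV.one hK hv, zero_add, one_nsmul]
    | (j+2) => rw [hk, GV.zero hK hv, top_add]; exact le_top

omit hK hv hd in
lemma add_divByMonic' (a b : Polynomial K) : (a + b) /ₘ φ = a /ₘ φ + b /ₘ φ := by
  have huniq := Polynomial.div_modByMonic_unique (f := a + b) (a /ₘ φ + b /ₘ φ)
    (a %ₘ φ + b %ₘ φ) hm ⟨by
      rw [mul_add]
      have ha := Polynomial.modByMonic_add_div a φ
      have hb := Polynomial.modByMonic_add_div b φ
      calc a %ₘ φ + b %ₘ φ + (φ * (a /ₘ φ) + φ * (b /ₘ φ))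
          = (a %ₘ φ + φ * (a /ₘ φ)) + (b %ₘ φ + φ * (b /ₘ φ)) := by ring
        _ = a + b := by rw [ha, hb], by
      refine lt_of_le_of_lt (Polynomial.degree_add_le _ _) (max_lt ?_ ?_) <;>
        exact Polynomial.degree_modByMonic_lt _ hm⟩
  exact huniq.1

omit hK hv hd in
lemma phiCoeff_add (k : ℕ) (a b : Polynomial K) :
    phiCoeff φ k (a + b) = phiCoeff φ k a + phiCoeff φ k b := by
  induction k generalizing a b with
  | zero => exact Polynomial.add_modByMonic a b
  | succ n ih =>
    show phiCoeff φ n ((a+b) /ₘ φ) = phiCoeff φ n (a /ₘ φ) + phiCoeff φ n (b /ₘ φ)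
    rw [add_divByMonic' hm, ih]

lemma aug_superadd (a b : Polynomial K) :
    min (augVal v φ lam a) (augVal v φ lam b) ≤ augVal v φ lam (a + b) := by
  set N := max (max a.natDegree b.natDegree) (a+b).natDegree + 1 with hN
  rw [augVal_eq_inf' hK hv hm hd (a+b) N (by omega)]
  apply Finset.le_inf
  intro k _
  rw [phiCoeff_add hm]
  calc min (augVal v φ lam a) (augVal v φ lam b)
      ≤ min (v (phiCoeff φ k a) + k • lam) (v (phiCoeff φ k b) + k • lam) :=
        min_le_min (aug_le_term hK hv hm hd a k) (aug_le_term hK hv hm hd b k)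
    _ = min (v (phiCoeff φ k a)) (v (phiCoeff φ k b)) + k • lam := (qinf_min_add _ _ _).symm
    _ ≤ v (phiCoeff φ k a + phiCoeff φ k b) + k • lam := by
        exact add_le_add_left (hv.superadd _ _) _

end augMore

section vExp
variable (hK : IsNormDiscreteVal vK) (hv : GV vK v) (hm : φ.Monic) (hd : 1 ≤ φ.natDegree)
  (hmin : VMinimal v φ)
include hK hv hm hd hmin

lemma hW_of_min : ∀ p : Polynomial K, p.natDegree < φ.natDegree → ¬ VDvd v φ p := by
  intro p hp hdvd
  exact absurd (hmin p hdvd) (by omega)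

lemma v_eq_inf : ∀ (N : ℕ) (p : Polynomial K), p.natDegree < N →
    v p = (Finset.range N).inf (fun k => v (phiCoeff φ k p) + k • (v φ)) := by
  intro N
  induction N with
  | zero => omega
  | succ n ih =>
    intro p hp
    by_cases hp0 : p = 0
    · subst hp0
      rw [GV.zero hK hv]
      refine (le_antisymm le_top (Finset.le_inf ?_)).symm
      intro k _
      rw [phiCoeff_zero_poly, GV.zero hK hv, top_add]
    have hEp : v p = min (v (p %ₘ φ)) (v (p /ₘ φ) + v φ) := by
      have hc' : (p %ₘ φ).natDegree < φ.natDegree := phiCoeff_natDegree_lt hm hd 0 p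
      conv_lhs => rw [← Polynomial.modByMonic_add_div p φ]
      rw [show φ * (p /ₘ φ) = (p /ₘ φ) * φ from mul_comm _ _]
      rw [E_lemma hK hv (hW_of_min hK hv hm hd hmin) _ _ hc', hv.mul]
    rw [hEp, inf_range_succ']
    have hF0 : v (phiCoeff φ 0 p) + (0 : ℕ) • (v φ) = v (p %ₘ φ) := by simp [phiCoeff]
    rw [hF0]
    congr 1
    by_cases hq : p /ₘ φ = 0
    · rw [hq, GV.zero hK hv, top_add]
      refine (le_antisymm le_top (Finset.le_inf ?_)).symm
      intro k _
      rw [show phiCoeff φ (k+1) p = phiCoeff φ k (p /ₘ φ) from rfl, hq, phiCoeff_zero_poly,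
        GV.zero hK hv, top_add]
    · have hle : φ.natDegree ≤ p.natDegree := by
        by_contra hc
        push_neg at hc
        exact hq ((Polynomial.divByMonic_eq_zero_iff hm).mpr (Polynomial.degree_lt_degree hc))
      have hlt : (p /ₘ φ).natDegree < n := by
        rw [Polynomial.natDegree_divByMonic p hm]
        omega
      rw [ih _ hlt]
      rw [show ∀ a b : Qinf, a + b = b + a from fun a b => add_comm a b, add_finset_inf]
      apply Finset.inf_congr rfl
      intro k _
      show v φ + (v (phiCoeff φ k (p /ₘ φ)) + k • (v φ))
          = v (phiCoeff φ (k+1) p) + (k+1) • (v φ)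
      have : phiCoeff φ (k+1) p = phiCoeff φ k (p /ₘ φ) := rfl
      rw [this, succ_nsmul, add_comm (v φ) _, add_assoc]

lemma aug_ge_v (hlam : v φ ≤ lam) (p : Polynomial K) : v p ≤ augVal v φ lam p := by
  rw [augVal_eq_inf hK hv hm hd, v_eq_inf hK hv hm hd hmin (p.natDegree + 1) p (by omega)]
  apply Finset.le_inf
  intro k hk
  refine le_trans (Finset.inf_le hk) ?_
  exact add_le_add_right (nsmul_le_nsmul_right hlam k) _

end vExp
end MLAux4

namespace MLAux5
open MLAux MLAux2 MLAux3 MLAux4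

variable {K : Type*} [Field K] {vK : K → Qinf}
variable {v : Polynomial K → Qinf} {φ : Polynomial K} {lam : Qinf}

lemma finset_inf_add {ι : Type*} (a : Qinf) (s : Finset ι) (f : ι → Qinf) :
    s.inf f + a = s.inf (fun i => f i + a) := by
  rw [add_comm, add_finset_inf]
  exact Finset.inf_congr rfl (fun i _ => add_comm _ _)

section augMul
variable (hK : IsNormDiscreteVal vK) (hv : GV vK v) (hm : φ.Monic) (hd : 1 ≤ φ.natDegree)
  (hmin : VMinimal v φ) (hirr : VIrreducible v φ) (hlam : v φ < lam)
include hK hv hm hd hmin hirr hlam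

set_option maxHeartbeats 4000000 in
theorem aug_mul (f g : Polynomial K) :
    augVal v φ lam (f * g) = augVal v φ lam f + augVal v φ lam g := by
  classical
  set d := φ.natDegree with hddef
  set N := f.natDegree + g.natDegree + 2 with hNdef
  set A : ℕ → Polynomial K := fun i => phiCoeff φ i f with hA
  set B : ℕ → Polynomial K := fun j => phiCoeff φ j g with hB
  set P : ℕ → Polynomial K :=
    fun k => ∑ ij ∈ Finset.HasAntidiagonal.antidiagonal k, A ij.1 * B ij.2 with hP
  -- the polynomial-of-polynomial trick
  set Ef : Polynomial (Polynomial K) :=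
    ∑ i ∈ Finset.range N, Polynomial.C (A i) * Polynomial.X ^ i with hEf
  set Eg : Polynomial (Polynomial K) :=
    ∑ j ∈ Finset.range N, Polynomial.C (B j) * Polynomial.X ^ j with hEg
  have hcoeffEf : ∀ k, Ef.coeff k = A k := by
    intro k
    rw [hEf, Polynomial.finset_sum_coeff]
    by_cases hk : k < N
    · rw [Finset.sum_eq_single k]
      · rw [Polynomial.coeff_C_mul, Polynomial.coeff_X_pow, if_pos rfl, mul_one]
      · intro i _ hik
        rw [Polynomial.coeff_C_mul, Polynomial.coeff_X_pow, if_neg (Ne.symm hik), mul_zero]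
      · intro hkn
        exact absurd (Finset.mem_range.mpr hk) hkn
    · push_neg at hk
      rw [Finset.sum_eq_zero, hA]
      · exact (phiCoeff_eq_zero hm hd (by omega)).symm
      · intro i hi
        have : i ≠ k := by have := Finset.mem_range.mp hi; omega
        rw [Polynomial.coeff_C_mul, Polynomial.coeff_X_pow, if_neg this.symm, mul_zero]
  have hcoeffEg : ∀ k, Eg.coeff k = B k := by
    intro k
    rw [hEg, Polynomial.finset_sum_coeff]
    by_cases hk : k < N
    · rw [Finset.sum_eq_single k]
      · rw [Polynomial.coeff_C_mul, Polynomial.coeff_X_pow, if_pos rfl, mul_one]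
      · intro i _ hik
        rw [Polynomial.coeff_C_mul, Polynomial.coeff_X_pow, if_neg (Ne.symm hik), mul_zero]
      · intro hkn
        exact absurd (Finset.mem_range.mpr hk) hkn
    · push_neg at hk
      rw [Finset.sum_eq_zero, hB]
      · exact (phiCoeff_eq_zero hm hd (by omega)).symm
      · intro i hi
        have : i ≠ k := by have := Finset.mem_range.mp hi; omega
        rw [Polynomial.coeff_C_mul, Polynomial.coeff_X_pow, if_neg this.symm, mul_zero]
  have hevalEf : Polynomial.eval φ Ef = f := by
    rw [hEf, Polynomial.eval_finset_sum]
    have : ∀ i ∈ Finset.range N,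
        Polynomial.eval φ (Polynomial.C (A i) * Polynomial.X ^ i) = A i * φ ^ i := by
      intro i _
      rw [Polynomial.eval_mul, Polynomial.eval_C, Polynomial.eval_pow, Polynomial.eval_X]
    rw [Finset.sum_congr rfl this]
    exact phiCoeff_sum_eq hm hd N f (by omega)
  have hevalEg : Polynomial.eval φ Eg = g := by
    rw [hEg, Polynomial.eval_finset_sum]
    have : ∀ j ∈ Finset.range N,
        Polynomial.eval φ (Polynomial.C (B j) * Polynomial.X ^ j) = B j * φ ^ j := by
      intro j _
      rw [Polynomial.eval_mul, Polynomial.eval_C, Polynomial.eval_pow, Polynomial.eval_X]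
    rw [Finset.sum_congr rfl this]
    exact phiCoeff_sum_eq hm hd N g (by omega)
  have hcoeffP : ∀ k, (Ef * Eg).coeff k = P k := by
    intro k
    rw [Polynomial.coeff_mul, hP]
    apply Finset.sum_congr rfl
    rintro ⟨i, j⟩ _
    rw [hcoeffEf, hcoeffEg]
  have hdegEf : Ef.natDegree ≤ N - 1 := by
    rw [hEf]
    apply Polynomial.natDegree_sum_le_of_forall_le
    intro i hi
    refine le_trans (Polynomial.natDegree_mul_le) ?_
    rw [Polynomial.natDegree_C, Polynomial.natDegree_X_pow]
    have := Finset.mem_range.mp hi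
    omega
  have hdegEg : Eg.natDegree ≤ N - 1 := by
    rw [hEg]
    apply Polynomial.natDegree_sum_le_of_forall_le
    intro i hi
    refine le_trans (Polynomial.natDegree_mul_le) ?_
    rw [Polynomial.natDegree_C, Polynomial.natDegree_X_pow]
    have := Finset.mem_range.mp hi
    omega
  have hdegEfg : (Ef * Eg).natDegree < 2 * N := by
    refine lt_of_le_of_lt (Polynomial.natDegree_mul_le) ?_
    omega
  have hfgsum : f * g = ∑ k ∈ Finset.range (2 * N), P k * φ ^ k := by
    have := Polynomial.eval_eq_sum_range' hdegEfg φ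
    rw [Polynomial.eval_mul, hevalEf, hevalEg] at this
    rw [this]
    apply Finset.sum_congr rfl
    intro k _
    rw [hcoeffP]
  -- zero bounds
  have hPzero : ∀ k, 2 * N - 1 ≤ k → P k = 0 := by
    intro k hk
    rw [hP]
    apply Finset.sum_eq_zero
    rintro ⟨i, j⟩ hij
    have hijk : i + j = k := Finset.HasAntidiagonal.mem_antidiagonal.mp hij
    show A i * B j = 0
    rcases le_or_gt N i with h | h
    · have hz : A i = 0 := phiCoeff_eq_zero hm hd (by omega)
      rw [hz, zero_mul]
    · have hz : B j = 0 := phiCoeff_eq_zero hm hd (by omega)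
      rw [hz, mul_zero]
  -- the reduced coefficients
  set e : ℕ → Polynomial K :=
    fun k => if k = 0 then P 0 %ₘ φ else P k %ₘ φ + P (k-1) /ₘ φ with he
  have hPdeg : ∀ k, (P k).natDegree ≤ 2 * d - 2 := by
    intro k
    rw [hP]
    apply Polynomial.natDegree_sum_le_of_forall_le
    rintro ⟨i, j⟩ _
    show (A i * B j).natDegree ≤ 2 * d - 2
    refine le_trans (Polynomial.natDegree_mul_le) ?_
    have h1 : (A i).natDegree < d := phiCoeff_natDegree_lt hm hd i f
    have h2 : (B j).natDegree < d := phiCoeff_natDegree_lt hm hd j g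
    omega
  have hDdeg : ∀ k, (P k /ₘ φ).natDegree < d := by
    intro k
    rw [Polynomial.natDegree_divByMonic _ hm]
    have := hPdeg k
    omega
  have hcdeg : ∀ k, (P k %ₘ φ).natDegree < d :=
    fun k => phiCoeff_natDegree_lt hm hd 0 (P k)
  have hedeg : ∀ k, (e k).natDegree < d := by
    intro k
    simp only [he]
    by_cases hk : k = 0
    · rw [if_pos hk]; exact hcdeg 0
    · rw [if_neg hk]
      refine lt_of_le_of_lt (Polynomial.natDegree_add_le _ _) ?_
      exact max_lt (hcdeg k) (hDdeg (k-1))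
  have hsplit : ∀ k, P k * φ ^ k = (P k %ₘ φ) * φ ^ k + (P k /ₘ φ) * φ ^ (k + 1) := by
    intro k
    conv_lhs => rw [← Polynomial.modByMonic_add_div (P k) φ]
    rw [pow_succ]
    ring
  have heS : ∀ k, e (k + 1) * φ ^ (k + 1)
      = (P (k+1) %ₘ φ) * φ ^ (k+1) + (P k /ₘ φ) * φ ^ (k + 1) := by
    intro k
    simp only [he]
    rw [if_neg (Nat.succ_ne_zero k), Nat.add_sub_cancel, add_mul]
  have he0 : e 0 * φ ^ 0 = (P 0 %ₘ φ) * φ ^ 0 := by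
    simp only [he]
    norm_num
  have hesum : f * g = ∑ k ∈ Finset.range (2 * N + 1), e k * φ ^ k := by
    rw [hfgsum]
    calc ∑ k ∈ Finset.range (2*N), P k * φ ^ k
        = ∑ k ∈ Finset.range (2*N), ((P k %ₘ φ) * φ ^ k + (P k /ₘ φ) * φ ^ (k+1)) :=
          Finset.sum_congr rfl (fun k _ => hsplit k)
      _ = (∑ k ∈ Finset.range (2*N), (P k %ₘ φ) * φ ^ k)
          + ∑ k ∈ Finset.range (2*N), (P k /ₘ φ) * φ ^ (k+1) := Finset.sum_add_distrib
      _ = (∑ k ∈ Finset.range (2*N+1), (P k %ₘ φ) * φ ^ k)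
          + ∑ k ∈ Finset.range (2*N), (P k /ₘ φ) * φ ^ (k+1) := by
            rw [Finset.sum_range_succ, hPzero (2*N) (by omega)]
            rw [Polynomial.zero_modByMonic, zero_mul, add_zero]
      _ = ((∑ k ∈ Finset.range (2*N), (P (k+1) %ₘ φ) * φ ^ (k+1)) + (P 0 %ₘ φ) * φ ^ 0)
          + ∑ k ∈ Finset.range (2*N), (P k /ₘ φ) * φ ^ (k+1) := by
            rw [Finset.sum_range_succ' (fun k => (P k %ₘ φ) * φ ^ k) (2*N)]
      _ = (∑ k ∈ Finset.range (2*N), ((P (k+1) %ₘ φ) * φ ^ (k+1) + (P k /ₘ φ) * φ ^ (k+1)))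
          + (P 0 %ₘ φ) * φ ^ 0 := by
            rw [Finset.sum_add_distrib]
            ring
      _ = (∑ k ∈ Finset.range (2*N), e (k+1) * φ ^ (k+1)) + e 0 * φ ^ 0 := by
            rw [Finset.sum_congr rfl (fun k _ => (heS k).symm), he0]
      _ = ∑ k ∈ Finset.range (2*N+1), e k * φ ^ k :=
            (Finset.sum_range_succ' (fun k => e k * φ ^ k) (2*N)).symm
  have hIdent : ∀ k, k < 2 * N + 1 → phiCoeff φ k (f * g) = e k :=
    phiCoeff_of_sum hm hd (2 * N + 1) e hedeg (f * g) hesum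
  -- value bounds
  set T := augVal v φ lam f + augVal v φ lam g with hT
  have hterm_f : ∀ i, augVal v φ lam f ≤ v (A i) + i • lam := fun i => aug_le_term hK hv hm hd f i
  have hterm_g : ∀ j, augVal v φ lam g ≤ v (B j) + j • lam := fun j => aug_le_term hK hv hm hd g j
  have hPbound : ∀ k, T ≤ v (P k) + k • lam := by
    intro k
    have h1 : (Finset.HasAntidiagonal.antidiagonal k).inf (fun ij => v (A ij.1 * B ij.2)) ≤ v (P k) := by
      rw [hP]
      exact superadd_sum (GV.zero hK hv) hv.superadd _ _
    refine le_trans ?_ (add_le_add_left h1 _)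
    rw [finset_inf_add]
    apply Finset.le_inf
    rintro ⟨i, j⟩ hij
    have hijk : i + j = k := Finset.HasAntidiagonal.mem_antidiagonal.mp hij
    rw [hv.mul]
    calc T ≤ (v (A i) + i • lam) + (v (B j) + j • lam) := add_le_add (hterm_f i) (hterm_g j)
      _ = v (A i) + v (B j) + (i • lam + j • lam) := add_add_add_comm _ _ _ _
      _ = v (A i) + v (B j) + k • lam := by rw [← add_nsmul, hijk]
  have hEP : ∀ k, v (P k) = min (v (P k %ₘ φ)) (v ((P k /ₘ φ) * φ)) := by
    intro k
    conv_lhs => rw [← Polynomial.modByMonic_add_div (P k) φ]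
    rw [show φ * (P k /ₘ φ) = (P k /ₘ φ) * φ from mul_comm _ _]
    exact E_lemma hK hv (hW_of_min hK hv hm hd hmin) _ _ (hcdeg k)
  have hcbound : ∀ k, T ≤ v (P k %ₘ φ) + k • lam := by
    intro k
    refine le_trans (hPbound k) (add_le_add_left ?_ _)
    rw [hEP k]
    exact min_le_left _ _
  have hDPbound : ∀ k, v (P k) ≤ v (P k /ₘ φ) + v φ := by
    intro k
    rw [hEP k, hv.mul]
    exact min_le_right _ _
  have hDbound : ∀ k, T ≤ v (P k /ₘ φ) + (k+1) • lam := by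
    intro k
    calc T ≤ v (P k) + k • lam := hPbound k
      _ ≤ (v (P k /ₘ φ) + v φ) + k • lam := add_le_add_left (hDPbound k) _
      _ ≤ (v (P k /ₘ φ) + lam) + k • lam := by
          exact add_le_add_left (add_le_add_right hlam.le _) _
      _ = v (P k /ₘ φ) + (k+1) • lam := by
          rw [succ_nsmul, add_assoc, add_comm lam (k • lam)]
  have hgedir : T ≤ augVal v φ lam (f * g) := by
    rw [augVal_eq_inf' hK hv hm hd (f*g) (2*N+1)
      (by
        have := Polynomial.natDegree_mul_le (p := f) (q := g)
        omega)]
    apply Finset.le_inf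
    intro k hk
    rw [hIdent k (Finset.mem_range.mp hk)]
    simp only [he]
    by_cases hk0 : k = 0
    · subst hk0
      rw [if_pos rfl]
      simpa using hcbound 0
    · rw [if_neg hk0]
      have hD' : T ≤ v (P (k-1) /ₘ φ) + k • lam := by
        have := hDbound (k-1)
        rwa [show (k-1)+1 = k from by omega] at this
      calc T ≤ min (v (P k %ₘ φ) + k • lam) (v (P (k-1) /ₘ φ) + k • lam) :=
            le_min (hcbound k) hD'
        _ = min (v (P k %ₘ φ)) (v (P (k-1) /ₘ φ)) + k • lam := (qinf_min_add _ _ _).symm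
        _ ≤ v (P k %ₘ φ + P (k-1) /ₘ φ) + k • lam := add_le_add_left (hv.superadd _ _) _
  -- ≤ direction
  by_cases hTtop : T = ⊤
  · rw [hTtop]
    exact le_antisymm le_top (hTtop ▸ hgedir)
  have hftop : augVal v φ lam f ≠ ⊤ := fun h => hTtop (by rw [hT, h, top_add])
  have hgtop : augVal v φ lam g ≠ ⊤ := fun h => hTtop (by rw [hT, h, add_top])
  have hNf : f.natDegree < N := by omega
  have hNg : g.natDegree < N := by omega
  have hfformula := augVal_eq_inf' (lam := lam) hK hv hm hd f N hNf
  have hgformula := augVal_eq_inf' (lam := lam) hK hv hm hd g N hNg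
  have hSfne : ((Finset.range N).filter
      (fun i => v (A i) + i • lam = augVal v φ lam f)).Nonempty := by
    obtain ⟨i, hi, hieq⟩ := Finset.exists_mem_eq_inf (Finset.range N)
      (by rw [Finset.nonempty_range_iff]; omega) (fun k => v (A k) + k • lam)
    exact ⟨i, Finset.mem_filter.mpr ⟨hi, by rw [← hieq, ← hfformula]⟩⟩
  have hSgne : ((Finset.range N).filter
      (fun j => v (B j) + j • lam = augVal v φ lam g)).Nonempty := by
    obtain ⟨j, hj, hjeq⟩ := Finset.exists_mem_eq_inf (Finset.range N)
      (by rw [Finset.nonempty_range_iff]; omega) (fun k => v (B k) + k • lam)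
    exact ⟨j, Finset.mem_filter.mpr ⟨hj, by rw [← hjeq, ← hgformula]⟩⟩
  set i0 := (Finset.filter _ (Finset.range N)).min' hSfne with hi0def
  set j0 := (Finset.filter _ (Finset.range N)).min' hSgne with hj0def
  have hi0 : v (A i0) + i0 • lam = augVal v φ lam f :=
    (Finset.mem_filter.mp ((Finset.filter _ (Finset.range N)).min'_mem hSfne)).2
  have hj0 : v (B j0) + j0 • lam = augVal v φ lam g :=
    (Finset.mem_filter.mp ((Finset.filter _ (Finset.range N)).min'_mem hSgne)).2
  have hi0lt : ∀ i, i < i0 → augVal v φ lam f < v (A i) + i • lam := by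
    intro i hi
    have hin : i ∈ Finset.range N := by
      have := Finset.mem_range.mp (Finset.mem_filter.mp
        ((Finset.filter _ (Finset.range N)).min'_mem hSfne)).1
      exact Finset.mem_range.mpr (by omega)
    rcases lt_or_eq_of_le (hterm_f i) with h | h
    · exact h
    · exact absurd (Finset.min'_le _ _ (Finset.mem_filter.mpr ⟨hin, h.symm⟩))
        (not_le.mpr hi)
  have hj0lt : ∀ j, j < j0 → augVal v φ lam g < v (B j) + j • lam := by
    intro j hj
    have hin : j ∈ Finset.range N := by
      have := Finset.mem_range.mp (Finset.mem_filter.mp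
        ((Finset.filter _ (Finset.range N)).min'_mem hSgne)).1
      exact Finset.mem_range.mpr (by omega)
    rcases lt_or_eq_of_le (hterm_g j) with h | h
    · exact h
    · exact absurd (Finset.min'_le _ _ (Finset.mem_filter.mpr ⟨hin, h.symm⟩))
        (not_le.mpr hj)
  set k0 := i0 + j0 with hk0def
  have hk0N : k0 < 2 * N := by
    have h1 := Finset.mem_range.mp (Finset.mem_filter.mp
      ((Finset.filter _ (Finset.range N)).min'_mem hSfne)).1
    have h2 := Finset.mem_range.mp (Finset.mem_filter.mp
      ((Finset.filter _ (Finset.range N)).min'_mem hSgne)).1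
    omega
  have hk0lam : k0 • lam ≠ ⊤ := by
    intro h
    have : i0 • lam + j0 • lam = ⊤ := by rw [← add_nsmul]; exact h
    rcases WithTop.add_eq_top.mp this with h' | h'
    · exact hftop (by rw [← hi0, h', add_top])
    · exact hgtop (by rw [← hj0, h', add_top])
  have hlead : v (A i0 * B j0) + k0 • lam = T := by
    rw [hv.mul, hT, ← hi0, ← hj0, hk0def, add_nsmul]
    exact add_add_add_comm _ _ _ _
  have hleadtop : v (A i0 * B j0) ≠ ⊤ := by
    intro h
    exact hTtop (by rw [← hlead, h, top_add])
  have hmem0 : (i0, j0) ∈ Finset.HasAntidiagonal.antidiagonal k0 := Finset.HasAntidiagonal.mem_antidiagonal.mpr rfl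
  have hrestval : v (A i0 * B j0) < v (P k0 - A i0 * B j0) := by
    have hPk0 : P k0 - A i0 * B j0
        = ∑ ij ∈ (Finset.HasAntidiagonal.antidiagonal k0).erase (i0, j0), A ij.1 * B ij.2 := by
      have h2 : A i0 * B j0
          + ∑ ij ∈ (Finset.HasAntidiagonal.antidiagonal k0).erase (i0, j0), A ij.1 * B ij.2 = P k0 := by
        rw [hP]
        exact Finset.add_sum_erase (Finset.HasAntidiagonal.antidiagonal k0) (fun ij => A ij.1 * B ij.2) (a := (i0, j0)) hmem0
      rw [← h2]
      ring
    rw [hPk0]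
    refine lt_of_lt_of_le ?_ (superadd_sum (GV.zero hK hv) hv.superadd _ _)
    rw [Finset.lt_inf_iff (lt_top_iff_ne_top.mpr hleadtop)]
    rintro ⟨i, j⟩ hij
    have hijk : i + j = k0 := Finset.HasAntidiagonal.mem_antidiagonal.mp (Finset.mem_of_mem_erase hij)
    have hijne : (i, j) ≠ (i0, j0) := Finset.ne_of_mem_erase hij
    have hstrict : T < (v (A i) + i • lam) + (v (B j) + j • lam) := by
      rcases lt_or_ge i i0 with h | h
      · exact WithTop.add_lt_add_of_lt_of_le hgtop (hi0lt i h) (hterm_g j)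
      · have hj : j < j0 := by
          by_cases hii : i = i0
          · exact absurd (show (i,j) = (i0,j0) by
              rw [hii, show j = j0 from by omega]) hijne
          · omega
        exact WithTop.add_lt_add_of_le_of_lt hftop (hterm_f i) (hj0lt j hj)
    have heq : v (A i * B j) + k0 • lam = (v (A i) + i • lam) + (v (B j) + j • lam) := by
      rw [hv.mul, ← hijk, add_nsmul]
      exact add_add_add_comm _ _ _ _
    have hlt2 : v (A i0 * B j0) + k0 • lam < v (A i * B j) + k0 • lam := by
      rw [hlead, heq]
      exact hstrict
    exact (WithTop.add_lt_add_iff_right hk0lam).mp hlt2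
  have hPk0val : v (P k0) = v (A i0 * B j0) := by
    have : P k0 = A i0 * B j0 + (P k0 - A i0 * B j0) := by ring
    rw [this]
    exact eq_of_add hv.superadd (GV.neg hK hv) hrestval
  have hc0val : v (P k0 %ₘ φ) = v (P k0) := by
    by_contra hne
    have hgt : v (P k0) < v (P k0 %ₘ φ) := by
      rcases lt_or_eq_of_le (by rw [hEP k0]; exact min_le_left _ _ :
        v (P k0) ≤ v (P k0 %ₘ φ)) with h | h
      · exact h
      · exact absurd h.symm hne
    have hsub : P k0 - (P k0 /ₘ φ) * φ = P k0 %ₘ φ := by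
      linear_combination -(Polynomial.modByMonic_add_div (P k0) φ)
    have hdvdP : VDvd v φ (A i0 * B j0) := by
      refine ⟨P k0 /ₘ φ, ?_⟩
      show v (A i0 * B j0) < v (A i0 * B j0 - (P k0 /ₘ φ) * φ)
      have hrw : A i0 * B j0 - (P k0 /ₘ φ) * φ
          = (-(P k0 - A i0 * B j0)) + (P k0 - (P k0 /ₘ φ) * φ) := by ring
      rw [hrw]
      refine lt_of_lt_of_le (lt_min ?_ ?_) (hv.superadd _ _)
      · rw [GV.neg hK hv]
        exact hrestval
      · rw [hsub, ← hPk0val]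
        exact hgt
    rcases hirr _ _ hdvdP with h | h
    · have := hmin _ h
      have h2 : (A i0).natDegree < d := phiCoeff_natDegree_lt hm hd i0 f
      omega
    · have := hmin _ h
      have h2 : (B j0).natDegree < d := phiCoeff_natDegree_lt hm hd j0 g
      omega
  have hek0 : v (e k0) + k0 • lam = T := by
    simp only [he]
    by_cases hk0 : k0 = 0
    · rw [if_pos hk0]
      rw [hk0] at hlead hc0val hPk0val ⊢
      rw [zero_nsmul, add_zero] at hlead ⊢
      exact hc0val.trans (hPk0val.trans hlead)
    · rw [if_neg hk0]
      have hcarrygt : v (P k0 %ₘ φ) < v (P (k0 - 1) /ₘ φ) := by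
        by_cases hDt : v (P (k0-1) /ₘ φ) + k0 • lam = ⊤
        · have hvc : v (P k0 %ₘ φ) ≠ ⊤ := by
            intro h
            apply hTtop
            rw [← hlead, ← hPk0val, ← hc0val, h, top_add]
          have hvD : v (P (k0-1) /ₘ φ) = ⊤ := by
            rcases WithTop.add_eq_top.mp hDt with h | h
            · exact h
            · exact absurd h hk0lam
          rw [hvD]
          exact lt_top_iff_ne_top.mpr hvc
        · have hne : v (P (k0-1) /ₘ φ) + (k0-1) • lam ≠ ⊤ := by
            intro h
            apply hDt
            rw [show k0 • lam = (k0-1) • lam + lam from by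
              rw [← succ_nsmul]; congr 1; omega]
            rw [← add_assoc, h, top_add]
          have hstrict : T < v (P (k0-1) /ₘ φ) + k0 • lam := by
            calc T ≤ v (P (k0-1)) + (k0-1) • lam := hPbound (k0-1)
              _ ≤ (v (P (k0-1) /ₘ φ) + v φ) + (k0-1) • lam :=
                  add_le_add_left (hDPbound (k0-1)) _
              _ = (v (P (k0-1) /ₘ φ) + (k0-1) • lam) + v φ := by
                  rw [add_assoc, add_comm (v φ), ← add_assoc]
              _ < (v (P (k0-1) /ₘ φ) + (k0-1) • lam) + lam :=
                  WithTop.add_lt_add_left hne hlam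
              _ = v (P (k0-1) /ₘ φ) + k0 • lam := by
                  rw [add_assoc]
                  congr 1
                  rw [← succ_nsmul]
                  congr 1
                  omega
          have hcl : v (P k0 %ₘ φ) + k0 • lam = T := by
            rw [hc0val, hPk0val]; exact hlead
          have hlt2 : v (P k0 %ₘ φ) + k0 • lam < v (P (k0-1) /ₘ φ) + k0 • lam :=
            lt_of_le_of_lt (le_of_eq hcl) hstrict
          exact (WithTop.add_lt_add_iff_right hk0lam).mp hlt2
      have hev : v (P k0 %ₘ φ + P (k0-1) /ₘ φ) = v (P k0 %ₘ φ) :=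
        eq_of_add hv.superadd (GV.neg hK hv) hcarrygt
      rw [hev, hc0val, hPk0val]
      exact hlead
  refine le_antisymm ?_ hgedir
  have hterm := aug_le_term (lam := lam) hK hv hm hd (f*g) k0
  rw [hIdent k0 (by omega)] at hterm
  exact le_of_le_of_eq hterm hek0

end augMul
end MLAux5

namespace MLAux6
open MLAux MLAux2 MLAux3 MLAux4 MLAux5

variable {K : Type*} [Field K] {vK : K → Qinf}
variable {v : Polynomial K → Qinf} {φ : Polynomial K} {lam : Qinf}

lemma aug_GV (hK : IsNormDiscreteVal vK) (hv : GV vK v) (hm : φ.Monic)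
    (hd : 1 ≤ φ.natDegree) (hmin : VMinimal v φ) (hirr : VIrreducible v φ)
    (hlam : v φ < lam) : GV vK (augVal v φ lam) := by
  refine ⟨aug_superadd hK hv hm hd, aug_mul hK hv hm hd hmin hirr hlam, ?_⟩
  intro c
  rw [aug_low hK hv hm hd _ (by rw [Polynomial.natDegree_C]; omega), hv.vC]

lemma aug_top_of_one (hv0 : v 0 = ⊤) : ∀ (n : ℕ) (g : Polynomial K),
    augValAux v 1 lam n g = ⊤ := by
  intro n
  induction n with
  | zero => intro g; rfl
  | succ m ih =>
    intro g
    by_cases hg : g = 0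
    · simp [augValAux, hg]
    · simp only [augValAux, if_neg hg]
      rw [Polynomial.modByMonic_one, hv0, ih, add_top]
      exact min_eq_right le_top

lemma maclane_GV (hK : IsNormDiscreteVal vK) {u : Polynomial K → Qinf}
    (h : IsMacLane vK u) : GV vK u ∨ (∀ g, u g = ⊤) := by
  induction h with
  | gauss => exact Or.inl (gauss_GV hK)
  | @aug v φ lam hml hkey hlam ih =>
    rcases ih with hv | htop
    · by_cases hd0 : φ.natDegree = 0
      · right
        intro g
        have hφ1 : φ = 1 := (hkey.1.natDegree_eq_zero).mp hd0
        rw [hφ1] at *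
        exact aug_top_of_one (GV.zero hK hv) _ g
      · exact Or.inl (aug_GV hK hv hkey.1 (by omega) hkey.2.2 hkey.2.1 hlam)
    · exact absurd (htop φ ▸ hlam) not_top_lt

lemma maclane_le_aug (hK : IsNormDiscreteVal vK) (hml : IsMacLane vK v)
    (hkey : IsKeyPoly v φ) (hlam : v φ < lam) : v ≤ augVal v φ lam := by
  rcases maclane_GV hK hml with hv | htop
  · by_cases hd0 : φ.natDegree = 0
    · intro p
      have hφ1 : φ = 1 := (hkey.1.natDegree_eq_zero).mp hd0
      rw [hφ1] at *
      rw [show augVal v 1 lam p = ⊤ from aug_top_of_one (GV.zero hK hv) _ p]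
      exact le_top
    · exact aug_ge_v hK hv hkey.1 (by omega) hkey.2.2 hlam.le
  · exact absurd (htop φ ▸ hlam) not_top_lt

lemma gauss_le_maclane (hK : IsNormDiscreteVal vK) {u : Polynomial K → Qinf}
    (h : IsMacLane vK u) : gaussVal vK ≤ u := by
  induction h with
  | gauss => exact le_refl _
  | @aug v φ lam hml hkey hlam ih =>
    exact le_trans ih (maclane_le_aug hK hml hkey hlam)

lemma aug_le_of (hK : IsNormDiscreteVal vK) (hv : GV vK v) (hm : φ.Monic)
    (hd : 1 ≤ φ.natDegree) {z : Polynomial K → Qinf} (hz : GV vK z)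
    (hzv : v ≤ z) (hzφ : lam ≤ z φ) : augVal v φ lam ≤ z := by
  intro p
  rw [augVal_eq_inf hK hv hm hd]
  have hexp : (∑ k ∈ Finset.range (p.natDegree + 1), phiCoeff φ k p * φ ^ k) = p :=
    phiCoeff_sum_eq hm hd _ p (Nat.lt_succ_self _)
  calc (Finset.range (p.natDegree + 1)).inf (fun k => v (phiCoeff φ k p) + k • lam)
      ≤ (Finset.range (p.natDegree + 1)).inf (fun k => z (phiCoeff φ k p * φ ^ k)) := by
        apply Finset.le_inf
        intro k hk
        refine le_trans (Finset.inf_le hk) ?_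
        rw [hz.mul, GV.pow hK hz]
        exact add_le_add (hzv _) (nsmul_le_nsmul_right hzφ k)
    _ ≤ z (∑ k ∈ Finset.range (p.natDegree + 1), phiCoeff φ k p * φ ^ k) :=
        superadd_sum (GV.zero hK hz) hz.superadd _ _
    _ = z p := by rw [hexp]

end MLAux6

namespace MLAux7
open MLAux MLAux2 MLAux3 MLAux4 MLAux5 MLAux6

variable {K : Type*} [Field K] {vK : K → Qinf}
variable {v : Polynomial K → Qinf} {φ : Polynomial K} {lam : Qinf}

set_option maxHeartbeats 1000000 in
theorem no_gain (hK : IsNormDiscreteVal vK) (hv : GV vK v) (hm : φ.Monic)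
    (hd : 1 ≤ φ.natDegree) (hmin : VMinimal v φ) (hirr : VIrreducible v φ)
    (hlam : v φ < lam) {ν : Polynomial K → Qinf} (hν : GV vK ν)
    (hle : augVal v φ lam ≤ ν) :
    ∀ g, g.natDegree < φ.natDegree → ν g = v g := by
  have hνv : v ≤ ν := le_trans (aug_ge_v hK hv hm hd hmin hlam.le) hle
  suffices H : ∀ (n : ℕ) (g : Polynomial K), g.natDegree = n → g.natDegree < φ.natDegree
      → ν g = v g by
    intro g hg; exact H g.natDegree g rfl hg
  intro n
  induction n using Nat.strong_induction_on with
  | _ n IH =>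
  intro g hgn hgd
  have hIH : ∀ p : Polynomial K, p.natDegree < n → ν p = v p := by
    intro p hp
    exact IH p.natDegree (by omega) p rfl (by omega)
  by_cases hz : n = 0
  · obtain ⟨c, hc⟩ := Polynomial.natDegree_eq_zero.mp (by omega : g.natDegree = 0)
    rw [← hc, hν.vC, hv.vC]
  by_contra hne
  have hgain : v g < ν g := lt_of_le_of_ne (hνv g) (Ne.symm hne)
  have hg0 : g ≠ 0 := by
    intro h; rw [h, GV.zero hK hv] at hgain; exact absurd hgain not_top_lt
  set gm := g * Polynomial.C (g.leadingCoeff)⁻¹ with hgmdef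
  have hlc : g.leadingCoeff ≠ 0 := Polynomial.leadingCoeff_ne_zero.mpr hg0
  have hlci : (g.leadingCoeff)⁻¹ ≠ 0 := inv_ne_zero hlc
  have hlct : vK (g.leadingCoeff)⁻¹ ≠ ⊤ := fun h => hlci ((hK.top_iff _).mp h)
  have hmonic : gm.Monic := Polynomial.monic_mul_leadingCoeff_inv hg0
  have hgmdeg : gm.natDegree = n := by
    rw [hgmdef, Polynomial.natDegree_mul_leadingCoeff_inv g hg0]; exact hgn
  have hvgm : v gm = v g + vK (g.leadingCoeff)⁻¹ := by
    rw [hgmdef, hv.mul, hv.vC]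
  have hνgm : ν gm = ν g + vK (g.leadingCoeff)⁻¹ := by
    rw [hgmdef, hν.mul, hν.vC]
  have hgainm : v gm < ν gm := by
    rw [hvgm, hνgm]
    exact WithTop.add_lt_add_right hlct hgain
  have hgd1 : 1 ≤ gm.natDegree := by omega
  -- WMin for gm
  have hWm : ∀ p : Polynomial K, p.natDegree < gm.natDegree → ¬ VDvd v gm p := by
    rintro p hp ⟨q, hq⟩
    have hq' : v p < v (p - q * gm) := hq
    have hvp_top : v p ≠ ⊤ := hq'.ne_top
    have hνp : ν p = v p := hIH p (by omega)
    have h1 : ν p < ν (p - q * gm) :=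
      lt_of_lt_of_le (hνp ▸ hq') (hνv _)
    have h2 : ν p < ν (q * gm) := by
      by_cases hqt : v q = ⊤
      · have hνq : ν q = ⊤ := top_le_iff.mp (hqt ▸ hνv q)
        have : ν (q * gm) = ⊤ := by rw [hν.mul, hνq, top_add]
        rw [this, hνp]
        exact lt_top_iff_ne_top.mpr hvp_top
      · have hvqg : v p ≤ v (q * gm) := by
          have hs := hv.superadd p (-(p - q * gm))
          rw [GV.neg hK hv, show p + -(p - q * gm) = q * gm from by ring] at hs
          exact le_trans (le_min (le_refl _) hq'.le) hs
        calc ν p = v p := hνp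
          _ ≤ v (q * gm) := hvqg
          _ = v q + v gm := hv.mul q gm
          _ < v q + ν gm := WithTop.add_lt_add_left hqt hgainm
          _ ≤ ν q + ν gm := add_le_add_left (hνv q) _
          _ = ν (q * gm) := (hν.mul q gm).symm
    have h3 : min (ν (p - q * gm)) (ν (q * gm)) ≤ ν p := by
      have hs := hν.superadd (p - q * gm) (q * gm)
      rwa [sub_add_cancel] at hs
    exact absurd (lt_of_lt_of_le (lt_min h1 h2) h3) (lt_irrefl _)
  -- decompose φ
  have hs0deg : (φ %ₘ gm).natDegree < gm.natDegree := phiCoeff_natDegree_lt hmonic hgd1 0 φ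
  have hφdec : φ = φ %ₘ gm + (φ /ₘ gm) * gm := by
    rw [mul_comm]
    exact (Polynomial.modByMonic_add_div φ gm).symm
  have hEφ : v φ = min (v (φ %ₘ gm)) (v ((φ /ₘ gm) * gm)) := by
    conv_lhs => rw [hφdec]
    exact E_lemma hK hv hWm _ _ hs0deg
  have hφgain : v φ < ν φ := by
    refine lt_of_lt_of_le hlam ?_
    rw [← aug_phi hK hv hm hd (lam := lam)]
    exact hle φ
  have hvφtop : v φ ≠ ⊤ := hlam.ne_top
  have hs0 : v φ < v (φ %ₘ gm) := by
    by_contra hc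
    push_neg at hc
    have hs0eq : v (φ %ₘ gm) = v φ := le_antisymm hc (hEφ ▸ min_le_left _ _)
    have hνs0 : ν (φ %ₘ gm) = v (φ %ₘ gm) := hIH _ (by omega)
    have hvQg : v φ ≤ v ((φ /ₘ gm) * gm) := hEφ ▸ min_le_right _ _
    have hQg_gt : ν (φ %ₘ gm) < ν ((φ /ₘ gm) * gm) := by
      by_cases hQt : v (φ /ₘ gm) = ⊤
      · have hνQ : ν (φ /ₘ gm) = ⊤ := top_le_iff.mp (hQt ▸ hνv _)
        have : ν ((φ /ₘ gm) * gm) = ⊤ := by rw [hν.mul, hνQ, top_add]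
        rw [this, hνs0, hs0eq]
        exact lt_top_iff_ne_top.mpr hvφtop
      · calc ν (φ %ₘ gm) = v (φ %ₘ gm) := hνs0
          _ = v φ := hs0eq
          _ ≤ v ((φ /ₘ gm) * gm) := hvQg
          _ = v (φ /ₘ gm) + v gm := hv.mul _ _
          _ < v (φ /ₘ gm) + ν gm := WithTop.add_lt_add_left hQt hgainm
          _ ≤ ν (φ /ₘ gm) + ν gm := add_le_add_left (hνv _) _
          _ = ν ((φ /ₘ gm) * gm) := (hν.mul _ _).symm
    have hνφ : ν φ = ν (φ %ₘ gm) := by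
      conv_lhs => rw [hφdec]
      exact eq_of_add hν.superadd (GV.neg hK hν) hQg_gt
    rw [hνφ, hνs0, hs0eq] at hφgain
    exact absurd hφgain (lt_irrefl _)
  have hvφQ : v φ = v ((φ /ₘ gm) * gm) := by
    rcases le_total (v (φ %ₘ gm)) (v ((φ /ₘ gm) * gm)) with h | h
    · exfalso
      rw [hEφ, min_eq_left h] at hs0
      exact absurd hs0 (lt_irrefl _)
    · rw [hEφ, min_eq_right h]
  have hdvd2 : VDvd v φ ((φ /ₘ gm) * gm) := by
    refine ⟨1, ?_⟩
    show v ((φ /ₘ gm) * gm) < v ((φ /ₘ gm) * gm - 1 * φ)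
    have hrw : (φ /ₘ gm) * gm - 1 * φ = -(φ %ₘ gm) := by
      linear_combination -hφdec
    rw [hrw, GV.neg hK hv, ← hvφQ]
    exact hs0
  rcases hirr _ _ hdvd2 with h | h
  · have h1 := hmin _ h
    have h2 : (φ /ₘ gm).natDegree = φ.natDegree - gm.natDegree :=
      Polynomial.natDegree_divByMonic φ hmonic
    omega
  · have h1 := hmin _ h
    omega

end MLAux7

namespace MLAux8
open MLAux MLAux2 MLAux3 MLAux4 MLAux5 MLAux6 MLAux7

variable {K : Type*} [Field K] {vK : K → Qinf}
variable {v2 : Polynomial K → Qinf} {φ2 : Polynomial K} {lam2 : Qinf}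

lemma aug_of_keydiff (hK : IsNormDiscreteVal vK) (hv2 : GV vK v2) (hm2 : φ2.Monic)
    (hd2 : 1 ≤ φ2.natDegree) {φ1 : Polynomial K} (hm1 : φ1.Monic)
    (hdeq : φ1.natDegree = φ2.natDegree) (hne : φ1 ≠ φ2) :
    augVal v2 φ2 lam2 φ1 = min (v2 (φ1 - φ2)) lam2 := by
  have hψ0 : φ1 - φ2 ≠ 0 := sub_ne_zero.mpr hne
  have hdegφ : φ1.degree = φ2.degree := by
    rw [Polynomial.degree_eq_natDegree hm1.ne_zero,
        Polynomial.degree_eq_natDegree hm2.ne_zero, hdeq]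
  have hψdeglt : (φ1 - φ2).degree < φ2.degree := by
    rw [← hdegφ]
    exact Polynomial.degree_sub_lt hdegφ hm1.ne_zero
      (by rw [hm1.leadingCoeff, hm2.leadingCoeff])
  have huniq := Polynomial.div_modByMonic_unique (f := φ1) 1 (φ1 - φ2) hm2
    ⟨by ring, hψdeglt⟩
  have h0 : phiCoeff φ2 0 φ1 = φ1 - φ2 := huniq.2
  have hdiv : φ1 /ₘ φ2 = 1 := huniq.1
  have h1 : phiCoeff φ2 1 φ1 = 1 := by
    show phiCoeff φ2 0 (φ1 /ₘ φ2) = 1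
    rw [hdiv]
    show (1 : Polynomial K) %ₘ φ2 = 1
    refine (Polynomial.modByMonic_eq_self_iff hm2).mpr ?_
    rw [Polynomial.degree_one, Polynomial.degree_eq_natDegree hm2.ne_zero]
    exact_mod_cast (by omega : (0:ℕ) < φ2.natDegree)
  have hk : ∀ j, phiCoeff φ2 (j+2) φ1 = 0 := by
    intro j
    show phiCoeff φ2 j ((φ1 /ₘ φ2) /ₘ φ2) = 0
    rw [hdiv, (Polynomial.divByMonic_eq_zero_iff hm2).mpr (by
      rw [Polynomial.degree_one, Polynomial.degree_eq_natDegree hm2.ne_zero]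
      exact_mod_cast (by omega : (0:ℕ) < φ2.natDegree)), phiCoeff_zero_poly]
  apply le_antisymm
  · refine le_min ?_ ?_
    · have := aug_le_term (lam := lam2) hK hv2 hm2 hd2 φ1 0
      rwa [h0, zero_nsmul, add_zero] at this
    · have := aug_le_term (lam := lam2) hK hv2 hm2 hd2 φ1 1
      rwa [h1, GV.one hK hv2, zero_add, one_nsmul] at this
  · rw [augVal_eq_inf hK hv2 hm2 hd2]
    apply Finset.le_inf
    intro k _
    match k with
    | 0 =>
      rw [h0, zero_nsmul, add_zero]
      exact min_le_left _ _
    | 1 =>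
      rw [h1, GV.one hK hv2, zero_add, one_nsmul]
      exact min_le_right _ _
    | (j+2) =>
      rw [hk, GV.zero hK hv2, top_add]
      exact le_top

set_option maxHeartbeats 1000000 in
theorem maclane_comp (hK : IsNormDiscreteVal vK) {ν : Polynomial K → Qinf} (hν : GV vK ν)
    {u1 : Polynomial K → Qinf} (h1 : IsMacLane vK u1) :
    ∀ u2 : Polynomial K → Qinf, IsMacLane vK u2 → u1 ≤ ν → u2 ≤ ν →
      u1 ≤ u2 ∨ u2 ≤ u1 := by
  induction h1 with
  | gauss =>
    intro u2 h2 _ _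
    exact Or.inl (gauss_le_maclane hK h2)
  | @aug v1 φ1 lam1 hml1 hkey1 hlam1 ih1 =>
    intro u2 h2
    induction h2 with
    | gauss =>
      intro _ _
      exact Or.inr (gauss_le_maclane hK (IsMacLane.aug hml1 hkey1 hlam1))
    | @aug v2 φ2 lam2 hml2 hkey2 hlam2 ih2 =>
      intro hle1 hle2
      have hgv1 : GV vK v1 := by
        rcases maclane_GV hK hml1 with h | h
        · exact h
        · exact absurd (h φ1 ▸ hlam1) not_top_lt
      have hgv2 : GV vK v2 := by
        rcases maclane_GV hK hml2 with h | h
        · exact h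
        · exact absurd (h φ2 ▸ hlam2) not_top_lt
      have hν1 : ν (1 : Polynomial K) = 0 := by
        rw [← Polynomial.C_1, hν.vC, vK_one hK]
      have hd1 : 1 ≤ φ1.natDegree := by
        by_contra hc
        push_neg at hc
        have hφone : φ1 = 1 := hkey1.1.natDegree_eq_zero.mp (by omega)
        have htop : augVal v1 φ1 lam1 (1 : Polynomial K) = ⊤ := by
          rw [hφone]; exact aug_top_of_one (GV.zero hK hgv1) _ _
        have hcontra := hle1 (1 : Polynomial K)
        rw [htop, hν1] at hcontra
        exact absurd (top_le_iff.mp hcontra) (by simp)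
      have hd2 : 1 ≤ φ2.natDegree := by
        by_contra hc
        push_neg at hc
        have hφone : φ2 = 1 := hkey2.1.natDegree_eq_zero.mp (by omega)
        have htop : augVal v2 φ2 lam2 (1 : Polynomial K) = ⊤ := by
          rw [hφone]; exact aug_top_of_one (GV.zero hK hgv2) _ _
        have hcontra := hle2 (1 : Polynomial K)
        rw [htop, hν1] at hcontra
        exact absurd (top_le_iff.mp hcontra) (by simp)
      have hGu1 : GV vK (augVal v1 φ1 lam1) :=
        aug_GV hK hgv1 hkey1.1 hd1 hkey1.2.2 hkey1.2.1 hlam1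
      have hGu2 : GV vK (augVal v2 φ2 lam2) :=
        aug_GV hK hgv2 hkey2.1 hd2 hkey2.2.2 hkey2.2.1 hlam2
      have hv1u1 : v1 ≤ augVal v1 φ1 lam1 := maclane_le_aug hK hml1 hkey1 hlam1
      have hv2u2 : v2 ≤ augVal v2 φ2 lam2 := maclane_le_aug hK hml2 hkey2 hlam2
      have hv1ν : v1 ≤ ν := le_trans hv1u1 hle1
      have hv2ν : v2 ≤ ν := le_trans hv2u2 hle2
      rcases ih2 hle1 hv2ν with h | hv2u1
      · exact Or.inl (le_trans h hv2u2)
      rcases ih1 (augVal v2 φ2 lam2) (IsMacLane.aug hml2 hkey2 hlam2) hv1ν hle2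
        with hv1u2 | h
      swap
      · exact Or.inr (le_trans h hv1u1)
      have hu1φ1 : augVal v1 φ1 lam1 φ1 = lam1 := aug_phi hK hgv1 hkey1.1 hd1
      have hu2φ2 : augVal v2 φ2 lam2 φ2 = lam2 := aug_phi hK hgv2 hkey2.1 hd2
      by_cases hc1 : lam1 ≤ augVal v2 φ2 lam2 φ1
      · exact Or.inl (aug_le_of hK hgv1 hkey1.1 hd1 hGu2 hv1u2 hc1)
      by_cases hc2 : lam2 ≤ augVal v1 φ1 lam1 φ2
      · exact Or.inr (aug_le_of hK hgv2 hkey2.1 hd2 hGu1 hv2u1 hc2)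
      push_neg at hc1 hc2
      exfalso
      have hng1 : ∀ g : Polynomial K, g.natDegree < φ1.natDegree → ν g = v1 g :=
        no_gain hK hgv1 hkey1.1 hd1 hkey1.2.2 hkey1.2.1 hlam1 hν hle1
      have hng2 : ∀ g : Polynomial K, g.natDegree < φ2.natDegree → ν g = v2 g :=
        no_gain hK hgv2 hkey2.1 hd2 hkey2.2.2 hkey2.2.1 hlam2 hν hle2
      have hνφ1 : lam1 ≤ ν φ1 := by rw [← hu1φ1]; exact hle1 φ1
      have hνφ2 : lam2 ≤ ν φ2 := by rw [← hu2φ2]; exact hle2 φ2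
      have hdd : φ1.natDegree = φ2.natDegree := by
        rcases lt_trichotomy φ1.natDegree φ2.natDegree with h | h | h
        · exfalso
          have ha := hng2 φ1 h
          have hb : augVal v2 φ2 lam2 φ1 = v2 φ1 := aug_low hK hgv2 hkey2.1 hd2 φ1 h
          rw [ha, ← hb] at hνφ1
          exact absurd (lt_of_le_of_lt hνφ1 hc1) (lt_irrefl _)
        · exact h
        · exfalso
          have ha := hng1 φ2 h
          have hb : augVal v1 φ1 lam1 φ2 = v1 φ2 := aug_low hK hgv1 hkey1.1 hd1 φ2 h
          rw [ha, ← hb] at hνφ2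
          exact absurd (lt_of_le_of_lt hνφ2 hc2) (lt_irrefl _)
      by_cases heq : φ1 = φ2
      · rw [heq, hu2φ2] at hc1
        rw [← heq, hu1φ1] at hc2
        exact absurd (hc1.trans hc2) (lt_irrefl _)
      have hψ0 : φ1 - φ2 ≠ 0 := sub_ne_zero.mpr heq
      have hψdeg : (φ1 - φ2).natDegree < φ2.natDegree := by
        have hdegφ : φ1.degree = φ2.degree := by
          rw [Polynomial.degree_eq_natDegree hkey1.1.ne_zero,
              Polynomial.degree_eq_natDegree hkey2.1.ne_zero, hdd]
        have hlt := Polynomial.degree_sub_lt hdegφ hkey1.1.ne_zero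
          (by rw [hkey1.1.leadingCoeff, hkey2.1.leadingCoeff])
        have h2 : (φ1 - φ2).degree < φ2.degree := by rw [← hdegφ]; exact hlt
        exact Polynomial.natDegree_lt_natDegree hψ0 h2
      have hψdeg1 : (φ1 - φ2).natDegree < φ1.natDegree := by omega
      have hu2φ1 : augVal v2 φ2 lam2 φ1 = min (v2 (φ1 - φ2)) lam2 :=
        aug_of_keydiff hK hgv2 hkey2.1 hd2 hkey1.1 hdd heq
      have hu1φ2 : augVal v1 φ1 lam1 φ2 = min (v1 (φ2 - φ1)) lam1 :=
        aug_of_keydiff hK hgv1 hkey1.1 hd1 hkey2.1 hdd.symm (Ne.symm heq)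
      have hv1ψ : v1 (φ2 - φ1) = v1 (φ1 - φ2) := GV.sub_comm hK hgv1 φ2 φ1
      have hνψ1 : ν (φ1 - φ2) = v1 (φ1 - φ2) := hng1 _ hψdeg1
      have hνψ2 : ν (φ1 - φ2) = v2 (φ1 - φ2) := hng2 _ hψdeg
      rcases le_or_gt lam2 (v2 (φ1 - φ2)) with hcase | hcase
      · rw [hu2φ1, min_eq_right hcase] at hc1
        have hge : lam2 ≤ augVal v1 φ1 lam1 φ2 := by
          rw [hu1φ2]
          refine le_min ?_ hc1.le
          rw [hv1ψ, ← hνψ1, hνψ2]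
          exact hcase
        exact absurd (lt_of_le_of_lt hge hc2) (lt_irrefl _)
      · have hu2φ1' : augVal v2 φ2 lam2 φ1 = v2 (φ1 - φ2) := by
          rw [hu2φ1, min_eq_left hcase.le]
        rw [hu2φ1'] at hc1
        have hνψlt : ν (φ1 - φ2) < lam1 := by rw [hνψ2]; exact hc1
        have hνφ1gt : ν (φ1 - φ2) < ν φ1 := lt_of_lt_of_le hνψlt hνφ1
        have hνφ2le : ν φ2 ≤ ν (φ1 - φ2) := by
          by_contra hcc
          push_neg at hcc
          have hs := hν.superadd φ1 (-φ2)
          rw [GV.neg hK hν, show φ1 + -φ2 = φ1 - φ2 from by ring] at hs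
          exact absurd (lt_of_lt_of_le (lt_min hνφ1gt hcc) hs) (lt_irrefl _)
        have hfin : lam2 ≤ ν (φ1 - φ2) := le_trans hνφ2 hνφ2le
        rw [hνψ2] at hfin
        exact absurd (lt_of_le_of_lt hfin hcase) (lt_irrefl _)

end MLAux8


namespace MLFinal
open MLAux MLAux2 MLAux3 MLAux4 MLAux5 MLAux6 MLAux7 MLAux8

variable {K : Type*} [Field K] {vK : K → Qinf}

lemma maclane_hasdeg {v : Polynomial K → Qinf} (h : IsMacLane vK v) :
    ∃ d, HasMLDegree vK v d := by
  induction h with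
  | gauss => exact ⟨1, Or.inl ⟨rfl, rfl⟩⟩
  | @aug v φ lam hml hkey hlam ih =>
    exact ⟨φ.natDegree, Or.inr ⟨v, φ, lam, hml, hkey, hlam, rfl, rfl⟩⟩

variable {Kb : Type*} [Field Kb] [Algebra K Kb]

lemma nu_GV (hK : IsNormDiscreteVal vK) {vbar : Kb → Qinf} (hvbar : IsExtVal vK vbar)
    (α : Kb) : GV vK (fun g : Polynomial K => vbar (Polynomial.aeval α g)) := by
  refine ⟨?_, ?_, ?_⟩
  · intro a b
    show min (vbar (Polynomial.aeval α a)) (vbar (Polynomial.aeval α b))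
      ≤ vbar (Polynomial.aeval α (a + b))
    rw [map_add]
    exact hvbar.pseudo.min_le_map_add _ _
  · intro a b
    show vbar (Polynomial.aeval α (a * b))
      = vbar (Polynomial.aeval α a) + vbar (Polynomial.aeval α b)
    rw [map_mul]
    exact hvbar.pseudo.map_mul _ _
  · intro c
    show vbar (Polynomial.aeval α (Polynomial.C c)) = vK c
    rw [Polynomial.aeval_C]
    exact hvbar.extends_vK c

lemma comp_of_common (hK : IsNormDiscreteVal vK) {vbar : Kb → Qinf}
    (hvbar : IsExtVal vK vbar) {u1 u2 : Polynomial K → Qinf} (h1 : IsMacLane vK u1)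
    (h2 : IsMacLane vK u2) {α : Kb} (hα1 : α ∈ Dset vbar u1) (hα2 : α ∈ Dset vbar u2) :
    u1 ≤ u2 ∨ u2 ≤ u1 :=
  maclane_comp hK (nu_GV hK hvbar α) h1 u2 h2 (fun g => hα1 g) (fun g => hα2 g)

end MLFinal

/-- Lemma `lem:wedgecluster`.
Let `(s,v)`, `(t,w)` be MacLane clusters for `f` and let `s ∧ t = D_{v∧w} ∩ R`.
Then `(s∧t, v∧w)` is a MacLane cluster for `f`, and it is the smallest MacLane
cluster containing `(s,v)` and `(t,w)`: any MacLane cluster `(u,z)` with `z ≤ v`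
and `z ≤ w` satisfies `z ≤ v ∧ w`. -/
theorem meet_is_smallest_containing_cluster
    {K : Type*} [Field K] {Kb : Type*} [Field Kb] [Algebra K Kb] [IsAlgClosure K Kb]
    (vK : K → Qinf) (hK : IsNormDiscreteVal vK) (hcompl : IsCompleteVal vK)
    (vbar : Kb → Qinf) (hvbar : IsExtVal vK vbar)
    (f : Polynomial K) (hsep : f.Separable)
    (hfint : ∀ i : ℕ, 0 ≤ vK ((Polynomial.C f.leadingCoeff⁻¹ * f).coeff i))
    (s t : Set Kb) (v w : Polynomial K → Qinf)
    (hsv : IsMLCluster vK vbar f s v) (htw : IsMLCluster vK vbar f t w)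
    (m : Polynomial K → Qinf) (hm : IsMLMeet vK v w m) :
    IsMLCluster vK vbar f (Dset vbar m ∩ rootSetOf f) m ∧
    ∀ (u : Set Kb) (z : Polynomial K → Qinf), IsMLCluster vK vbar f u z →
      z ≤ v → z ≤ w → z ≤ m := by
  classical
  obtain ⟨hmML, hmv, hmw, hmax⟩ := hm
  obtain ⟨hvML, hsne, hseq, hsmin⟩ := hsv
  obtain ⟨hwML, htne, hteq, htmin⟩ := htw
  have hsubDm : s ⊆ Dset vbar m ∩ rootSetOf f := by
    intro α hα
    rw [hseq] at hα
    exact ⟨fun g => le_trans (hmv g) (hα.1 g), hα.2⟩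
  have htsubDm : t ⊆ Dset vbar m ∩ rootSetOf f := by
    intro β hβ
    rw [hteq] at hβ
    exact ⟨fun g => le_trans (hmw g) (hβ.1 g), hβ.2⟩
  constructor
  · refine ⟨hmML, ?_, rfl, ?_⟩
    · obtain ⟨α, hα⟩ := hsne
      exact ⟨α, hsubDm hα⟩
    · intro w' hw'ML hlt hset dm dw' hdm hdw'
      obtain ⟨α, hα⟩ := hsne
      have hαv : α ∈ Dset vbar v := by rw [hseq] at hα; exact hα.1
      have hαw' : α ∈ Dset vbar w' := by
        have h := hsubDm hα
        rw [hset] at h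
        exact h.1
      obtain ⟨β, hβ⟩ := htne
      have hβw : β ∈ Dset vbar w := by rw [hteq] at hβ; exact hβ.1
      have hβw' : β ∈ Dset vbar w' := by
        have h := htsubDm hβ
        rw [hset] at h
        exact h.1
      have hcomp1 : v ≤ w' ∨ w' ≤ v :=
        MLFinal.comp_of_common hK hvbar hvML hw'ML hαv hαw'
      have hcomp2 : w ≤ w' ∨ w' ≤ w :=
        MLFinal.comp_of_common hK hvbar hwML hw'ML hβw hβw'
      have hnotboth : ¬ (w' ≤ v ∧ w' ≤ w) := by
        rintro ⟨h1, h2⟩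
        have h3 := hmax w' hw'ML h1 h2
        exact hlt.ne (le_antisymm hlt.le h3)
      rcases hcomp1 with hvw' | hw'v
      · -- case v ≤ w'
        have hsSet : s = Dset vbar w' ∩ rootSetOf f := by
          apply Set.Subset.antisymm
          · intro x hx
            have h := hsubDm hx
            rwa [hset] at h
          · intro x hx
            rw [hseq]
            exact ⟨fun g => le_trans (hvw' g) (hx.1 g), hx.2⟩
        have htsubs : t ⊆ s := by
          intro x hx
          have h := htsubDm hx
          rw [hset, ← hsSet] at h
          exact h
        have hβs := htsubs hβ
        have hβv : β ∈ Dset vbar v := by rw [hseq] at hβs; exact hβs.1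
        rcases MLFinal.comp_of_common hK hvbar hvML hwML hβv hβw with hvw | hwv
        · have hmv' : m = v := le_antisymm hmv (hmax v hvML (le_refl v) hvw)
          have hvlt : v < w' := by rw [← hmv']; exact hlt
          exact hsmin w' hw'ML hvlt hsSet dm dw' (hmv' ▸ hdm) hdw'
        · have hmw' : m = w := le_antisymm hmw (hmax w hwML hwv (le_refl w))
          have hwlt : w < w' := by rw [← hmw']; exact hlt
          have htSet : t = Dset vbar w' ∩ rootSetOf f := by
            rw [← hsSet]
            apply Set.Subset.antisymm htsubs
            intro x hx
            rw [hteq]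
            rw [hseq] at hx
            exact ⟨fun g => le_trans (hwv g) (hx.1 g), hx.2⟩
          exact htmin w' hw'ML hwlt htSet dm dw' (hmw' ▸ hdm) hdw'
      · rcases hcomp2 with hww' | hw'w
        swap
        · exact absurd ⟨hw'v, hw'w⟩ hnotboth
        have htSet : t = Dset vbar w' ∩ rootSetOf f := by
          apply Set.Subset.antisymm
          · intro x hx
            have h := htsubDm hx
            rwa [hset] at h
          · intro x hx
            rw [hteq]
            exact ⟨fun g => le_trans (hww' g) (hx.1 g), hx.2⟩
        have hssubt : s ⊆ t := by
          intro x hx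
          have h := hsubDm hx
          rw [hset, ← htSet] at h
          exact h
        have hαt := hssubt hα
        have hαw : α ∈ Dset vbar w := by rw [hteq] at hαt; exact hαt.1
        rcases MLFinal.comp_of_common hK hvbar hvML hwML hαv hαw with hvw | hwv
        · have hmv' : m = v := le_antisymm hmv (hmax v hvML (le_refl v) hvw)
          have hvlt : v < w' := by rw [← hmv']; exact hlt
          have hsSet : s = Dset vbar w' ∩ rootSetOf f := by
            rw [← htSet]
            apply Set.Subset.antisymm hssubt
            intro x hx
            rw [hseq]
            rw [hteq] at hx
            exact ⟨fun g => le_trans (hvw g) (hx.1 g), hx.2⟩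
          exact hsmin w' hw'ML hvlt hsSet dm dw' (hmv' ▸ hdm) hdw'
        · have hmw' : m = w := le_antisymm hmw (hmax w hwML hwv (le_refl w))
          have hwlt : w < w' := by rw [← hmw']; exact hlt
          exact htmin w' hw'ML hwlt htSet dm dw' (hmw' ▸ hdm) hdw'
  · rintro u z ⟨hzML, _, _, _⟩ hzv hzw
    exact hmax z hzML hzv hzw
end

section
/- Let v be a MacLane pseudo-valuation and let s = D_v ∩ R be nonempty. Then v ≤ v_s, and the pair (s, v_s) is a MacLane cluster for f. -/
open Polynomial
open scoped Classical

/-- `vs` is the MacLane pseudo-valuation `v_s = v_{F₁} ∧ … ∧ v_{F_m}`, the meet of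
the pseudo-valuations `v_F (g) = min_{F(r)=0} v_K(g(r))` over the monic irreducible
factors `F` of `∏_{r ∈ s} (x - r)` (i.e. the monic irreducible `F ∈ K[x]` with a
root in `s`); here `w ≤ v_F` is expressed as `w g ≤ v_K(g(r))` for all `g` and
all roots `r` of `F`. -/
def IsVsOf {K : Type*} [Field K] {Kb : Type*} [Field Kb] [Algebra K Kb]
    (vK : K → Qinf) (vbar : Kb → Qinf) (s : Set Kb)
    (vs : Polynomial K → Qinf) : Prop :=
  IsMacLane vK vs ∧
  (∀ F : Polynomial K, F.Monic → Irreducible F →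
      (∃ r ∈ s, Polynomial.aeval r F = 0) →
      ∀ (g : Polynomial K) (r : Kb), Polynomial.aeval r F = 0 →
        vs g ≤ vbar (Polynomial.aeval r g)) ∧
  (∀ w : Polynomial K → Qinf, IsMacLane vK w →
      (∀ F : Polynomial K, F.Monic → Irreducible F →
        (∃ r ∈ s, Polynomial.aeval r F = 0) →
        ∀ (g : Polynomial K) (r : Kb), Polynomial.aeval r F = 0 →
          w g ≤ vbar (Polynomial.aeval r g)) →
      w ≤ vs)

set_option linter.unusedSectionVars false

noncomputable section

namespace MLAux

lemma qinf_coe_le_coe {a b : ℚ} : ((a:ℚ):Qinf) ≤ (b:ℚ) ↔ a ≤ b := WithTop.coe_le_coe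

lemma eq_top_of_forall {x : Qinf} (h : ∀ M : ℚ, ((M:ℚ):Qinf) ≤ x) : x = ⊤ := by
  rcases eq_or_ne x ⊤ with h' | h'
  · exact h'
  · rcases WithTop.ne_top_iff_exists.1 h' with ⟨q, rfl⟩
    have := h (q+1)
    rw [WithTop.coe_le_coe] at this
    linarith

section PV
variable {L : Type*} [Field L] {w : L → Qinf} (hw : IsPseudoVal w)
  (htop : ∀ a : L, w a = ⊤ ↔ a = 0)

include hw htop

lemma w_zero : w 0 = ⊤ := (htop 0).2 rfl

lemma w_one : w 1 = 0 := by
  have h1 : w 1 = w 1 + w 1 := by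
    have := hw.map_mul 1 1; rw [one_mul] at this; exact this
  have hne : w 1 ≠ ⊤ := fun h => one_ne_zero ((htop 1).1 h)
  rcases WithTop.ne_top_iff_exists.1 hne with ⟨q, hq⟩
  rw [← hq] at h1 ⊢
  rw [← WithTop.coe_add, WithTop.coe_eq_coe] at h1
  have : q = 0 := by linarith
  simp [this]

lemma w_neg (a : L) : w (-a) = w a := by
  have hm1 : w (-1 : L) = 0 := by
    have h1 : w ((-1 : L) * (-1)) = w (-1) + w (-1) := hw.map_mul _ _
    rw [neg_one_mul, neg_neg, w_one hw htop] at h1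
    have hne : w (-1 : L) ≠ ⊤ := fun h => by
      have := (htop _).1 h; norm_num at this
    rcases WithTop.ne_top_iff_exists.1 hne with ⟨q, hq⟩
    rw [← hq] at h1 ⊢
    rw [← WithTop.coe_add] at h1
    have h2 : (0:ℚ) = q + q := WithTop.coe_eq_coe.1 h1
    have : q = 0 := by linarith
    simp [this]
  calc w (-a) = w ((-1) * a) := by rw [neg_one_mul]
  _ = w (-1) + w a := hw.map_mul _ _
  _ = w a := by rw [hm1, zero_add]

lemma w_sub_min (a b : L) : min (w a) (w b) ≤ w (a - b) := by
  have := hw.min_le_map_add a (-b)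
  rw [w_neg hw htop] at this
  simpa [sub_eq_add_neg] using this

lemma w_add_eq_of_lt {a b : L} (h : w a < w b) : w (a + b) = w a := by
  refine le_antisymm ?_ ?_
  · by_contra hlt
    push_neg at hlt
    have h2 : min (w (a+b)) (w b) ≤ w a := by
      have := w_sub_min hw htop (a+b) b
      simpa using this
    rcases le_min_iff.1 (le_refl (min (w (a+b)) (w b))) with ⟨_, _⟩
    rcases min_le_iff.1 h2 with h3 | h3
    · exact absurd h3 (not_le.2 hlt)
    · exact absurd h3 (not_le.2 h)
  · have := hw.min_le_map_add a b
    rwa [min_eq_left h.le] at this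

lemma w_sum_le {ι : Type*} (s : Finset ι) (f : ι → L) (C : Qinf)
    (h : ∀ i ∈ s, C ≤ w (f i)) : C ≤ w (∑ i ∈ s, f i) := by
  classical
  induction s using Finset.cons_induction with
  | empty => simp [w_zero hw htop]
  | cons a s ha ih =>
      rw [Finset.sum_cons]
      refine le_trans (le_min (h a (Finset.mem_cons_self a s))
        (ih fun i hi => h i (Finset.mem_cons_of_mem hi))) (hw.min_le_map_add _ _)

lemma w_pow {β : L} {b : ℚ} (hb : w β = (b:ℚ)) (n : ℕ) :
    w (β ^ n) = (((n:ℚ) * b : ℚ) : Qinf) := by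
  induction n with
  | zero => simpa using w_one hw htop
  | succ n ih =>
      rw [pow_succ, hw.map_mul, ih, hb, ← WithTop.coe_add, WithTop.coe_eq_coe]
      push_cast
      ring

end PV

end MLAux

section Part2
namespace MLAux
open Polynomial

variable {K : Type*} [Field K]

/-- low part: coefficients of degree < k -/
def lowP (k : ℕ) (r : Polynomial K) : Polynomial K :=
  ∑ j ∈ Finset.range k, Polynomial.C (r.coeff j) * Polynomial.X ^ j

/-- high part: `r = lowP k r + highP k r * X^k` -/
def highP (k : ℕ) (r : Polynomial K) : Polynomial K :=
  ∑ j ∈ Finset.range (r.natDegree + 1), Polynomial.C (r.coeff (j + k)) * Polynomial.X ^ j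

lemma coeff_lowP (k : ℕ) (r : Polynomial K) (j : ℕ) :
    (lowP k r).coeff j = if j < k then r.coeff j else 0 := by
  rw [lowP, finset_sum_coeff]
  simp only [coeff_C_mul, coeff_X_pow, mul_ite, mul_one, mul_zero]
  rw [Finset.sum_ite_eq (Finset.range k) j (fun i => r.coeff i)]
  simp [Finset.mem_range]

lemma coeff_highP (k : ℕ) (r : Polynomial K) (j : ℕ) :
    (highP k r).coeff j = r.coeff (j + k) := by
  rw [highP, finset_sum_coeff]
  simp only [coeff_C_mul, coeff_X_pow, mul_ite, mul_one, mul_zero]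
  rw [Finset.sum_ite_eq (Finset.range (r.natDegree + 1)) j (fun i => r.coeff (i + k))]
  by_cases h : j ∈ Finset.range (r.natDegree + 1)
  · simp [h]
  · simp only [h, if_false]
    rw [Finset.mem_range, not_lt] at h
    exact (coeff_eq_zero_of_natDegree_lt (by omega)).symm

lemma coeff_mkpoly (m : ℕ) (c : ℕ → K) (j : ℕ) :
    (∑ i ∈ Finset.range m, Polynomial.C (c i) * Polynomial.X ^ i).coeff j =
      if j < m then c j else 0 := by
  rw [finset_sum_coeff]
  simp only [coeff_C_mul, coeff_X_pow, mul_ite, mul_one, mul_zero]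
  rw [Finset.sum_ite_eq (Finset.range m) j (fun i => c i)]
  simp [Finset.mem_range]

lemma lowP_add_highP (k : ℕ) (r : Polynomial K) :
    lowP k r + highP k r * Polynomial.X ^ k = r := by
  ext j
  rw [coeff_add, coeff_lowP, Polynomial.coeff_mul_X_pow']
  by_cases h : j < k
  · simp [h, not_le.2 h]
  · push_neg at h
    simp only [if_neg (not_lt.2 h), if_pos h, coeff_highP, zero_add]
    congr 1
    omega

end MLAux
end Part2

section Part3
namespace MLAux
open Polynomial

variable {K : Type*} [Field K]

/-- `VB t q f` : the `t`-weighted Gauss valuation of `f` is at least `q`. -/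
def VB (vK : K → Qinf) (t q : ℚ) (f : Polynomial K) : Prop :=
  ∀ j : ℕ, ((q - t*(j:ℚ) : ℚ) : Qinf) ≤ vK (f.coeff j)

variable {vK : K → Qinf} (hw : IsPseudoVal vK) (htop : ∀ a : K, vK a = ⊤ ↔ a = 0)
  {t : ℚ}

lemma qinf_add_le {x y : ℚ} {X Y : Qinf} (hx : ((x:ℚ):Qinf) ≤ X) (hy : ((y:ℚ):Qinf) ≤ Y) :
    ((x + y : ℚ) : Qinf) ≤ X + Y := by
  rw [WithTop.coe_add]; exact add_le_add hx hy

omit hw htop in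
lemma VB_mono {q q' : ℚ} {f : Polynomial K} (h : q' ≤ q) (hf : VB vK t q f) :
    VB vK t q' f := fun j => le_trans (by rw [WithTop.coe_le_coe]; linarith) (hf j)

include hw htop in
lemma VB_add {q : ℚ} {f g : Polynomial K} (hf : VB vK t q f) (hg : VB vK t q g) :
    VB vK t q (f + g) := by
  intro j
  rw [coeff_add]
  exact le_trans (le_min (hf j) (hg j)) (hw.min_le_map_add _ _)

include hw htop in
lemma VB_neg {q : ℚ} {f : Polynomial K} (hf : VB vK t q f) : VB vK t q (-f) := by
  intro j
  rw [coeff_neg, w_neg hw htop]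
  exact hf j

include hw htop in
lemma VB_sub {q : ℚ} {f g : Polynomial K} (hf : VB vK t q f) (hg : VB vK t q g) :
    VB vK t q (f - g) := by
  rw [sub_eq_add_neg]; exact VB_add hw htop hf (VB_neg hw htop hg)

include hw htop in
lemma VB_mul {q q' : ℚ} {f g : Polynomial K} (hf : VB vK t q f) (hg : VB vK t q' g) :
    VB vK t (q + q') (f * g) := by
  intro j
  rw [coeff_mul]
  refine w_sum_le hw htop _ _ _ (fun x hx => ?_)
  rw [Finset.HasAntidiagonal.mem_antidiagonal] at hx
  rw [hw.map_mul]
  have h1 := qinf_add_le (hf x.1) (hg x.2)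
  refine le_trans (le_of_eq ?_) h1
  rw [WithTop.coe_eq_coe]
  have : (x.1 : ℚ) + (x.2 : ℚ) = (j : ℚ) := by
    rw [← hx]; push_cast; ring
  rw [← this]; ring

omit hw htop in
lemma VB_C {qc : ℚ} {c : K} (htop0 : vK 0 = ⊤) (h : ((qc:ℚ):Qinf) ≤ vK c) :
    VB vK t qc (Polynomial.C c) := by
  intro j
  rw [coeff_C]
  by_cases hj : j = 0
  · simpa [hj] using h
  · simp [hj, htop0]

include hw htop in
lemma VB_X_pow (k : ℕ) : VB vK t (t*(k:ℚ)) (Polynomial.X ^ k : Polynomial K) := by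
  intro j
  rw [coeff_X_pow]
  by_cases hj : j = k
  · subst hj
    rw [if_pos rfl, w_one hw htop]
    rw [show (t*(j:ℚ) - t*(j:ℚ) : ℚ) = 0 by ring]
    exact le_refl _
  · simp [hj, w_zero hw htop]

omit hw htop in
lemma VB_lowP {q : ℚ} {f : Polynomial K} (htop0 : vK 0 = ⊤) (k : ℕ) (hf : VB vK t q f) :
    VB vK t q (lowP k f) := by
  intro j
  rw [coeff_lowP]
  by_cases hj : j < k
  · simpa [hj] using hf j
  · simp [hj, htop0]

omit hw htop in
lemma VB_highP {q : ℚ} {f : Polynomial K} (k : ℕ) (hf : VB vK t q f) :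
    VB vK t (q - t*(k:ℚ)) (highP k f) := by
  intro j
  rw [coeff_highP]
  refine le_trans (le_of_eq ?_) (hf (j + k))
  rw [WithTop.coe_eq_coe]
  push_cast
  ring

omit hw htop in
lemma VB_zero {q : ℚ} (htop0 : vK 0 = ⊤) : VB vK t q (0 : Polynomial K) := by
  intro j; simp [htop0]

end MLAux
end Part3

section Part4
namespace MLAux
open Polynomial

variable {K : Type*} [Field K]

/-- Hensel approximation sequence for factoring `p` at the vertex `k`. -/
def henSeq (k : ℕ) (ck : K) (p : Polynomial K) : ℕ → Polynomial K × Polynomial K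
  | 0 => (highP k p, Polynomial.X ^ k)
  | n+1 =>
      let g := (henSeq k ck p n).1
      let h := (henSeq k ck p n).2
      let r := p - g * h
      (g + highP k r, h + Polynomial.C ck⁻¹ * lowP k r)

lemma coeff_mul_high {g h : Polynomial K} {dg dh : ℕ}
    (hg1 : g.coeff dg = 1) (hg0 : ∀ j, dg < j → g.coeff j = 0)
    (hh1 : h.coeff dh = 1) (hh0 : ∀ j, dh < j → h.coeff j = 0) :
    (g * h).coeff (dg + dh) = 1 ∧ ∀ m, dg + dh < m → (g * h).coeff m = 0 := by
  constructor
  · rw [coeff_mul]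
    rw [Finset.sum_eq_single (dg, dh)]
    · rw [hg1, hh1, one_mul]
    · rintro ⟨a, b⟩ hab hne
      rw [Finset.HasAntidiagonal.mem_antidiagonal] at hab
      have : dg < a ∨ dh < b := by
        by_contra hc
        push_neg at hc
        apply hne
        have : a = dg ∧ b = dh := by omega
        simp [this.1, this.2]
      rcases this with h' | h'
      · rw [hg0 a h', zero_mul]
      · rw [hh0 b h', mul_zero]
    · intro h'
      simp [Finset.mem_antidiagonal] at h'
  · intro m hm
    rw [coeff_mul]
    apply Finset.sum_eq_zero
    rintro ⟨a, b⟩ hab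
    rw [Finset.HasAntidiagonal.mem_antidiagonal] at hab
    have : dg < a ∨ dh < b := by omega
    rcases this with h' | h'
    · rw [hg0 a h', zero_mul]
    · rw [hh0 b h', mul_zero]

variable {vK : K → Qinf} (hw : IsPseudoVal vK) (htop : ∀ a : K, vK a = ⊤ ↔ a = 0)

include hw htop in
lemma w_inv {a : K} {q : ℚ} (ha : vK a = ((q:ℚ):Qinf)) : vK a⁻¹ = ((-q : ℚ):Qinf) := by
  have ha0 : a ≠ 0 := by
    intro h
    rw [h, (htop 0).2 rfl] at ha
    exact (WithTop.top_ne_coe) ha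
  have h1 : vK a + vK a⁻¹ = 0 := by
    rw [← hw.map_mul, mul_inv_cancel₀ ha0, w_one hw htop]
  rw [ha] at h1
  have hne : vK a⁻¹ ≠ ⊤ := by
    intro h
    rw [h] at h1
    simp at h1
  rcases WithTop.ne_top_iff_exists.1 hne with ⟨q', hq'⟩
  rw [← hq'] at h1 ⊢
  rw [← WithTop.coe_add] at h1
  have h2 : q + q' = 0 := WithTop.coe_eq_coe.1 h1
  rw [WithTop.coe_eq_coe]
  linarith

include hw htop in
/-- The main invariants of the Hensel iteration. -/
lemma henSeq_inv {p : Polynomial K} (hp : p.Monic) {k : ℕ} {t A ε : ℚ}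
    (hε : 0 < ε) (hkd : k < p.natDegree)
    (hck : vK (p.coeff k) = ((A - t*(k:ℚ) : ℚ):Qinf))
    (hvertex : ∀ i : ℕ, i ≠ k → ((A + ε - t*(i:ℚ) : ℚ):Qinf) ≤ vK (p.coeff i)) (n : ℕ) :
    VB vK t (A - t*(k:ℚ) + ε) ((henSeq k (p.coeff k) p n).1 - Polynomial.C (p.coeff k)) ∧
    VB vK t (t*(k:ℚ) + ε) ((henSeq k (p.coeff k) p n).2 - Polynomial.X ^ k) ∧
    VB vK t (A + ε + (n:ℚ)*ε) (p - (henSeq k (p.coeff k) p n).1 * (henSeq k (p.coeff k) p n).2) ∧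
    ((henSeq k (p.coeff k) p n).1.coeff (p.natDegree - k) = 1 ∧
      ∀ j, p.natDegree - k < j → (henSeq k (p.coeff k) p n).1.coeff j = 0) ∧
    ((henSeq k (p.coeff k) p n).2.coeff k = 1 ∧
      ∀ j, k < j → (henSeq k (p.coeff k) p n).2.coeff j = 0) := by
  set d := p.natDegree with hd
  set ck := p.coeff k with hckdef
  have htop0 : vK 0 = ⊤ := (htop 0).2 rfl
  have hck0 : ck ≠ 0 := by
    intro h
    rw [h, htop0] at hck
    exact WithTop.top_ne_coe hck
  have hkle : k ≤ d := le_of_lt hkd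
  induction n with
  | zero =>
      simp only [henSeq]
      refine ⟨?_, ?_, ?_, ?_, ?_⟩
      · -- P1
        intro j
        rw [coeff_sub, coeff_highP, coeff_C]
        by_cases hj : j = 0
        · subst hj
          rw [zero_add, if_pos rfl, ← hckdef, sub_self, htop0]
          exact le_top
        · rw [if_neg hj, sub_zero]
          have hjk : j + k ≠ k := by omega
          refine le_trans (le_of_eq ?_) (hvertex (j+k) hjk)
          rw [WithTop.coe_eq_coe]; push_cast; ring
      · -- P2
        rw [sub_self]
        exact VB_zero htop0
      · -- P3
        have heq : p - highP k p * Polynomial.X ^ k = lowP k p := by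
          have := lowP_add_highP k p
          linear_combination -this
        rw [heq]
        intro j
        rw [coeff_lowP]
        by_cases hj : j < k
        · rw [if_pos hj]
          refine le_trans (le_of_eq ?_) (hvertex j (by omega))
          rw [WithTop.coe_eq_coe]; push_cast; ring
        · rw [if_neg hj, htop0]; exact le_top
      · -- P4
        constructor
        · rw [coeff_highP, Nat.sub_add_cancel hkle]
          exact hp.coeff_natDegree
        · intro j hj
          rw [coeff_highP]
          exact coeff_eq_zero_of_natDegree_lt (by omega)
      · -- P5
        constructor
        · simp [coeff_X_pow]
        · intro j hj
          rw [coeff_X_pow, if_neg (by omega)]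
  | succ n ih =>
      obtain ⟨P1, P2, P3, P4, P5⟩ := ih
      set g := (henSeq k ck p n).1 with hg
      set h := (henSeq k ck p n).2 with hh
      set r := p - g * h with hr
      set α := Polynomial.C ck⁻¹ * lowP k r with hα
      set β := highP k r with hβ
      have hstep : henSeq k ck p (n+1) = (g + β, h + α) := by
        rw [henSeq]
      have hnε : (0:ℚ) ≤ (n:ℚ)*ε := mul_nonneg (Nat.cast_nonneg n) hε.le
      have hvinv : vK ck⁻¹ = ((-(A - t*(k:ℚ)) : ℚ):Qinf) := w_inv hw htop hck
      have hVα : VB vK t (-(A - t*(k:ℚ)) + (A + ε + (n:ℚ)*ε)) α :=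
        VB_mul hw htop (VB_C htop0 (le_of_eq hvinv.symm)) (VB_lowP htop0 k P3)
      have hVβ : VB vK t ((A + ε + (n:ℚ)*ε) - t*(k:ℚ)) β := VB_highP k P3
      have hCckα : Polynomial.C ck * α = lowP k r := by
        rw [hα, ← mul_assoc, ← Polynomial.C_mul, mul_inv_cancel₀ hck0, Polynomial.C_1, one_mul]
      have hrid : r = Polynomial.C ck * α + β * Polynomial.X ^ k := by
        rw [hCckα, hβ]
        exact (lowP_add_highP k r).symm
      refine ⟨?_, ?_, ?_, ?_, ?_⟩
      · -- P1'
        rw [hstep]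
        have : (g + β) - Polynomial.C ck = (g - Polynomial.C ck) + β := by ring
        rw [this]
        exact VB_add hw htop P1 (VB_mono (by linarith) hVβ)
      · -- P2'
        rw [hstep]
        have : (h + α) - Polynomial.X ^ k = (h - Polynomial.X ^ k) + α := by ring
        rw [this]
        exact VB_add hw htop P2 (VB_mono (by linarith) hVα)
      · -- P3'
        rw [hstep]
        have hid : p - (g + β) * (h + α) =
            -((g - Polynomial.C ck) * α + β * (h - Polynomial.X ^ k) + β * α) := by
          have h1 : p - g * h = Polynomial.C ck * α + β * Polynomial.X ^ k := by
            rw [← hr]; exact hrid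
          linear_combination h1
        rw [hid]
        have hb1 : VB vK t (A + ε + (n:ℚ)*ε + ε) ((g - Polynomial.C ck) * α) := by
          have := VB_mul hw htop P1 hVα
          exact VB_mono (by linarith) this
        have hb2 : VB vK t (A + ε + (n:ℚ)*ε + ε) (β * (h - Polynomial.X ^ k)) := by
          have := VB_mul hw htop hVβ P2
          exact VB_mono (by linarith) this
        have hb3 : VB vK t (A + ε + (n:ℚ)*ε + ε) (β * α) := by
          have := VB_mul hw htop hVβ hVα
          exact VB_mono (by linarith) this
        have : VB vK t (A + ε + (n:ℚ)*ε + ε)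
            ((g - Polynomial.C ck) * α + β * (h - Polynomial.X ^ k) + β * α) :=
          VB_add hw htop (VB_add hw htop hb1 hb2) hb3
        refine VB_mono (le_of_eq ?_) (VB_neg hw htop this)
        push_cast; ring
      · -- P4'
        rw [hstep]
        have hr_high : ∀ m, d ≤ m → r.coeff m = 0 := by
          intro m hm
          have hgh := coeff_mul_high P4.1 P4.2 P5.1 P5.2
          have hdk : d - k + k = d := Nat.sub_add_cancel hkle
          have hpd : p.coeff d = 1 := hp.coeff_natDegree
          rcases eq_or_lt_of_le hm with hm' | hm'
          · have h1 : (g * h).coeff d = 1 := by rw [← hdk]; exact hgh.1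
            rw [hr, coeff_sub, ← hm', hpd, h1, sub_self]
          · rw [hr, coeff_sub, hgh.2 m (by omega),
              coeff_eq_zero_of_natDegree_lt (by omega), sub_self]
        constructor
        · rw [coeff_add, P4.1, hβ, coeff_highP,
            hr_high (d - k + k) (by omega), add_zero]
        · intro j hj
          rw [coeff_add, P4.2 j hj, hβ, coeff_highP, hr_high (j+k) (by omega), add_zero]
      · -- P5'
        rw [hstep]
        constructor
        · rw [coeff_add, P5.1, hα, coeff_C_mul, coeff_lowP, if_neg (by omega),
            mul_zero, add_zero]
        · intro j hj
          rw [coeff_add, P5.2 j hj, hα, coeff_C_mul, coeff_lowP, if_neg (by omega),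
            mul_zero, add_zero]

end MLAux
end Part4

section Part5
namespace MLAux
open Polynomial

variable {K : Type*} [Field K]
variable {vK : K → Qinf} (hw : IsPseudoVal vK) (htop : ∀ a : K, vK a = ⊤ ↔ a = 0)

include hw htop in
lemma seq_limits (hcompl : IsCompleteVal vK) {ε : ℚ} (hε : 0 < ε) (x : ℕ → K) (c0 : ℚ)
    (hdiff : ∀ n : ℕ, ((c0 + (n:ℚ)*ε : ℚ):Qinf) ≤ vK (x (n+1) - x n)) :
    ∃ a : K, ∀ M : ℚ, ∃ N : ℕ, ∀ n, N ≤ n → ((M:ℚ):Qinf) ≤ vK (x n - a) := by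
  have tel : ∀ n m : ℕ, n ≤ m → ((c0 + (n:ℚ)*ε : ℚ):Qinf) ≤ vK (x m - x n) := by
    intro n m hnm
    induction m, hnm using Nat.le_induction with
    | base => rw [sub_self, w_zero hw htop]; exact le_top
    | succ m hm ih =>
        have hsplit : x (m+1) - x n = (x (m+1) - x m) + (x m - x n) := by ring
        rw [hsplit]
        refine le_trans (le_min ?_ ih) (hw.min_le_map_add _ _)
        refine le_trans ?_ (hdiff m)
        rw [WithTop.coe_le_coe]
        have : (n:ℚ) ≤ (m:ℚ) := by exact_mod_cast hm
        nlinarith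
  apply hcompl
  intro M
  obtain ⟨N, hN⟩ := exists_nat_ge ((M - c0)/ε)
  have hMc : M ≤ c0 + (N:ℚ)*ε := by
    rw [div_le_iff₀ hε] at hN
    linarith
  refine ⟨N, fun m hm n hn => ?_⟩
  have key : ∀ a b : ℕ, N ≤ a → a ≤ b → ((M:ℚ):Qinf) ≤ vK (x b - x a) := by
    intro a b ha hab
    refine le_trans ?_ (tel a b hab)
    rw [WithTop.coe_le_coe]
    have h1 : (N:ℚ) ≤ (a:ℚ) := by exact_mod_cast ha
    nlinarith
  rcases le_total n m with h | h
  · exact key n m hn h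
  · rw [show x m - x n = -(x n - x m) by ring, w_neg hw htop]
    exact key m n hm h

include hw htop in
lemma lim_top_of_spec {a : K} (h : ∀ M : ℚ, ((M:ℚ):Qinf) ≤ vK a) : a = 0 :=
  (htop a).1 (eq_top_of_forall h)

include hw htop in
/-- The Hensel factorization at an interior vertex of the Newton polygon. -/
lemma hensel_factor (hcompl : IsCompleteVal vK) {p : Polynomial K} (hp : p.Monic)
    {k : ℕ} {t A ε : ℚ} (hε : 0 < ε) (hkd : k < p.natDegree)
    (hck : vK (p.coeff k) = ((A - t*(k:ℚ) : ℚ):Qinf))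
    (hvertex : ∀ i : ℕ, i ≠ k → ((A + ε - t*(i:ℚ) : ℚ):Qinf) ≤ vK (p.coeff i)) :
    ∃ G H : Polynomial K, p = G * H ∧
      G.coeff (p.natDegree - k) = 1 ∧ (∀ j, p.natDegree - k < j → G.coeff j = 0) ∧
      H.coeff k = 1 ∧ (∀ j, k < j → H.coeff j = 0) := by
  set d := p.natDegree with hd
  set ck := p.coeff k with hckdef
  have htop0 : vK 0 = ⊤ := (htop 0).2 rfl
  have hck0 : ck ≠ 0 := by
    intro h
    rw [h, htop0] at hck
    exact WithTop.top_ne_coe hck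
  have inv := henSeq_inv hw htop hp hε hkd hck hvertex
  set gs : ℕ → ℕ → K := fun n j => (henSeq k ck p n).1.coeff j with hgs
  set hs : ℕ → ℕ → K := fun n j => (henSeq k ck p n).2.coeff j with hhs
  have hsucc : ∀ n : ℕ, henSeq k ck p (n+1) =
      ((henSeq k ck p n).1 + highP k (p - (henSeq k ck p n).1 * (henSeq k ck p n).2),
       (henSeq k ck p n).2 + Polynomial.C ck⁻¹ *
         lowP k (p - (henSeq k ck p n).1 * (henSeq k ck p n).2)) := fun n => by
    rw [henSeq]
  have hvinv : vK ck⁻¹ = ((-(A - t*(k:ℚ)) : ℚ):Qinf) := w_inv hw htop hck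
  -- difference bounds
  have hgdiff : ∀ j n : ℕ,
      (((A + ε - t*(k:ℚ) - t*(j:ℚ)) + (n:ℚ)*ε : ℚ):Qinf) ≤ vK (gs (n+1) j - gs n j) := by
    intro j n
    have hb := VB_highP (t := t) k (inv n).2.2.1
    have : gs (n+1) j - gs n j =
        (highP k (p - (henSeq k ck p n).1 * (henSeq k ck p n).2)).coeff j := by
      rw [hgs]
      simp only [hsucc n, coeff_add]
      ring
    rw [this]
    refine le_trans (le_of_eq ?_) (hb j)
    rw [WithTop.coe_eq_coe]; ring
  have hhdiff : ∀ j n : ℕ,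
      (((t*(k:ℚ) + ε - t*(j:ℚ)) + (n:ℚ)*ε : ℚ):Qinf) ≤ vK (hs (n+1) j - hs n j) := by
    intro j n
    have hVα := VB_mul hw htop (t := t) (VB_C htop0 (le_of_eq hvinv.symm))
      (VB_lowP htop0 k (inv n).2.2.1)
    have : hs (n+1) j - hs n j =
        (Polynomial.C ck⁻¹ *
          lowP k (p - (henSeq k ck p n).1 * (henSeq k ck p n).2)).coeff j := by
      rw [hhs]
      simp only [hsucc n, coeff_add]
      ring
    rw [this]
    refine le_trans (le_of_eq ?_) (hVα j)
    rw [WithTop.coe_eq_coe]; ring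
  -- limits
  have hglim : ∀ j : ℕ, ∃ a : K, ∀ M : ℚ, ∃ N : ℕ, ∀ n, N ≤ n →
      ((M:ℚ):Qinf) ≤ vK (gs n j - a) :=
    fun j => seq_limits hw htop hcompl hε (fun n => gs n j) _ (hgdiff j)
  have hhlim : ∀ j : ℕ, ∃ a : K, ∀ M : ℚ, ∃ N : ℕ, ∀ n, N ≤ n →
      ((M:ℚ):Qinf) ≤ vK (hs n j - a) :=
    fun j => seq_limits hw htop hcompl hε (fun n => hs n j) _ (hhdiff j)
  set glim : ℕ → K := fun j => (hglim j).choose with hglimdef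
  set hlim : ℕ → K := fun j => (hhlim j).choose with hhlimdef
  have hglimspec : ∀ (j : ℕ) (M : ℚ), ∃ N : ℕ, ∀ n, N ≤ n →
      ((M:ℚ):Qinf) ≤ vK (gs n j - glim j) := fun j => (hglim j).choose_spec
  have hhlimspec : ∀ (j : ℕ) (M : ℚ), ∃ N : ℕ, ∀ n, N ≤ n →
      ((M:ℚ):Qinf) ≤ vK (hs n j - hlim j) := fun j => (hhlim j).choose_spec
  -- identification of limits of eventually-constant coordinates
  have hlim_const : ∀ (x : ℕ → K) (a c : K), (∀ M : ℚ, ∃ N : ℕ, ∀ n, N ≤ n →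
      ((M:ℚ):Qinf) ≤ vK (x n - a)) → (∀ n, x n = c) → a = c := by
    intro x a c hspec hconst
    have h1 : ∀ M : ℚ, ((M:ℚ):Qinf) ≤ vK (c - a) := by
      intro M
      obtain ⟨N, hN⟩ := hspec M
      have := hN N le_rfl
      rwa [hconst N] at this
    have h2 := lim_top_of_spec hw htop (a := c - a) h1
    have := sub_eq_zero.1 h2
    exact this.symm
  have hglim_zero : ∀ j, d - k < j → glim j = 0 := by
    intro j hj
    exact hlim_const (fun n => gs n j) (glim j) 0 (hglimspec j)
      (fun n => (inv n).2.2.2.1.2 j hj)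
  have hglim_one : glim (d - k) = 1 :=
    hlim_const (fun n => gs n (d-k)) (glim (d-k)) 1 (hglimspec (d-k))
      (fun n => (inv n).2.2.2.1.1)
  have hhlim_zero : ∀ j, k < j → hlim j = 0 := by
    intro j hj
    exact hlim_const (fun n => hs n j) (hlim j) 0 (hhlimspec j)
      (fun n => (inv n).2.2.2.2.2 j hj)
  have hhlim_one : hlim k = 1 :=
    hlim_const (fun n => hs n k) (hlim k) 1 (hhlimspec k)
      (fun n => (inv n).2.2.2.2.1)
  -- the limit polynomials
  set G : Polynomial K :=
    ∑ j ∈ Finset.range (d - k + 1), Polynomial.C (glim j) * Polynomial.X ^ j with hGdef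
  set H : Polynomial K :=
    ∑ j ∈ Finset.range (k + 1), Polynomial.C (hlim j) * Polynomial.X ^ j with hHdef
  have hGc : ∀ j, G.coeff j = glim j := by
    intro j
    rw [hGdef, coeff_mkpoly]
    by_cases hj : j < d - k + 1
    · rw [if_pos hj]
    · rw [if_neg hj, hglim_zero j (by omega)]
  have hHc : ∀ j, H.coeff j = hlim j := by
    intro j
    rw [hHdef, coeff_mkpoly]
    by_cases hj : j < k + 1
    · rw [if_pos hj]
    · rw [if_neg hj, hhlim_zero j (by omega)]
  -- uniform lower bounds on coefficients
  set Cg : ℚ := min (A - t*(k:ℚ)) (A - t*(k:ℚ) + ε - (d:ℚ)* |t|) with hCgdef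
  set Ch : ℚ := min 0 (t*(k:ℚ) + ε - (k:ℚ)* |t|) with hChdef
  have habs : ∀ a m : ℕ, a ≤ m → t*(a:ℚ) ≤ (m:ℚ)* |t| := by
    intro a m ham
    have h1 : t*(a:ℚ) ≤ |t| *(a:ℚ) :=
      mul_le_mul_of_nonneg_right (le_abs_self t) (Nat.cast_nonneg a)
    have h2 : |t| *(a:ℚ) ≤ |t| *(m:ℚ) :=
      mul_le_mul_of_nonneg_left (by exact_mod_cast ham) (abs_nonneg t)
    linarith
  have hgsb : ∀ n a, ((Cg:ℚ):Qinf) ≤ vK (gs n a) := by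
    intro n a
    by_cases ha : a ≤ d - k
    · have h1 := (inv n).1 a
      have hsplit : gs n a = ((henSeq k ck p n).1 - Polynomial.C ck).coeff a
          + (Polynomial.C ck).coeff a := by
        rw [hgs]; simp only [coeff_sub]; ring
      rw [hsplit]
      refine le_trans (le_min ?_ ?_) (hw.min_le_map_add _ _)
      · refine le_trans ?_ h1
        rw [WithTop.coe_le_coe]
        have := habs a d (by omega)
        rw [hCgdef]
        have := min_le_right (A - t*(k:ℚ)) (A - t*(k:ℚ) + ε - (d:ℚ)* |t|)
        have h3 := habs a d (by omega)
        linarith [min_le_right (A - t*(k:ℚ)) (A - t*(k:ℚ) + ε - (d:ℚ)* |t|)]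
      · rw [coeff_C]
        by_cases ha0 : a = 0
        · rw [if_pos ha0, hck]
          rw [WithTop.coe_le_coe]
          exact min_le_left _ _
        · rw [if_neg ha0, htop0]; exact le_top
    · have : gs n a = 0 := (inv n).2.2.2.1.2 a (by omega)
      rw [this, htop0]; exact le_top
  have hhsb : ∀ n b, ((Ch:ℚ):Qinf) ≤ vK (hs n b) := by
    intro n b
    by_cases hb : b ≤ k
    · have h1 := (inv n).2.1 b
      have hsplit : hs n b = ((henSeq k ck p n).2 - Polynomial.X ^ k).coeff b
          + (Polynomial.X ^ k : Polynomial K).coeff b := by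
        rw [hhs]; simp only [coeff_sub]; ring
      rw [hsplit]
      refine le_trans (le_min ?_ ?_) (hw.min_le_map_add _ _)
      · refine le_trans ?_ h1
        rw [WithTop.coe_le_coe]
        have h3 := habs b k hb
        linarith [min_le_right (0:ℚ) (t*(k:ℚ) + ε - (k:ℚ)* |t|)]
      · rw [coeff_X_pow]
        by_cases hbk : b = k
        · rw [if_pos hbk, w_one hw htop]
          have : Ch ≤ 0 := min_le_left _ _
          exact_mod_cast this
        · rw [if_neg hbk, htop0]; exact le_top
    · have : hs n b = 0 := (inv n).2.2.2.2.2 b (by omega)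
      rw [this, htop0]; exact le_top
  have hGb : ∀ a, ((Cg:ℚ):Qinf) ≤ vK (G.coeff a) := by
    intro a
    obtain ⟨N, hN⟩ := hglimspec a Cg
    have h2 := hN N le_rfl
    have hsplit : G.coeff a = gs N a - (gs N a - glim a) := by rw [hGc a]; ring
    rw [hsplit]
    exact le_trans (le_min (hgsb N a) h2) (w_sub_min hw htop _ _)
  have hHb : ∀ b, ((Ch:ℚ):Qinf) ≤ vK (H.coeff b) := by
    intro b
    obtain ⟨N, hN⟩ := hhlimspec b Ch
    have h2 := hN N le_rfl
    have hsplit : H.coeff b = hs N b - (hs N b - hlim b) := by rw [hHc b]; ring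
    rw [hsplit]
    exact le_trans (le_min (hhsb N b) h2) (w_sub_min hw htop _ _)
  -- uniform convergence on finitely many indices
  have unif : ∀ (xx : ℕ → ℕ → K) (lim : ℕ → K),
      (∀ (j : ℕ) (M : ℚ), ∃ N : ℕ, ∀ n, N ≤ n → ((M:ℚ):Qinf) ≤ vK (xx n j - lim j)) →
      ∀ (J : ℕ) (M : ℚ), ∃ N : ℕ, ∀ n, N ≤ n → ∀ j ≤ J,
        ((M:ℚ):Qinf) ≤ vK (xx n j - lim j) := by
    intro xx lim hx J M
    induction J with
    | zero =>
        obtain ⟨N, hN⟩ := hx 0 M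
        exact ⟨N, fun n hn j hj => by rw [Nat.le_zero.1 hj]; exact hN n hn⟩
    | succ J ih =>
        obtain ⟨N1, h1⟩ := ih
        obtain ⟨N2, h2⟩ := hx (J+1) M
        refine ⟨max N1 N2, fun n hn j hj => ?_⟩
        rcases Nat.lt_or_ge j (J+1) with h | h
        · exact h1 n (le_trans (le_max_left _ _) hn) j (by omega)
        · have : j = J + 1 := by omega
          rw [this]
          exact h2 n (le_trans (le_max_right _ _) hn)
  -- the factorization
  have hfact : p = G * H := by
    have hkey : ∀ jj : ℕ, (p - G*H).coeff jj = 0 := by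
      intro jj
      refine (htop _).1 (eq_top_of_forall ?_)
      intro M
      -- choose n
      obtain ⟨N1, hN1⟩ := exists_nat_ge ((M - (A + ε - t*(jj:ℚ)))/ε)
      obtain ⟨N2, hN2⟩ := unif gs glim hglimspec jj (M - Ch)
      obtain ⟨N3, hN3⟩ := unif hs hlim hhlimspec jj (M - Cg)
      set n := max (max N1 N2) N3 with hn
      have hnN1 : N1 ≤ n := le_trans (le_max_left _ _) (le_max_left _ _)
      have hnN2 : N2 ≤ n := le_trans (le_max_right _ _) (le_max_left _ _)
      have hnN3 : N3 ≤ n := le_max_right _ _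
      set g := (henSeq k ck p n).1 with hgdef2
      set h := (henSeq k ck p n).2 with hhdef2
      have hsplit3 : p - G*H = (p - g*h) + ((g - G)*h + G*(h - H)) := by ring
      rw [hsplit3, coeff_add, coeff_add]
      refine le_trans (le_min ?_ (le_trans (le_min ?_ ?_) (hw.min_le_map_add _ _)))
        (hw.min_le_map_add _ _)
      · -- the r_n part
        refine le_trans ?_ ((inv n).2.2.1 jj)
        rw [WithTop.coe_le_coe]
        rw [div_le_iff₀ hε] at hN1
        have h1 : (N1:ℚ) ≤ (n:ℚ) := by exact_mod_cast hnN1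
        nlinarith [hε.le]
      · -- (g - G) * h part
        rw [coeff_mul]
        refine w_sum_le hw htop _ _ _ (fun x hx => ?_)
        rw [Finset.HasAntidiagonal.mem_antidiagonal] at hx
        rw [hw.map_mul]
        have hxa : x.1 ≤ jj := by omega
        have hb1 : ((M - Ch : ℚ):Qinf) ≤ vK ((g - G).coeff x.1) := by
          have := hN2 n hnN2 x.1 hxa
          rw [coeff_sub, hGc]
          exact this
        have hb2 := hhsb n x.2
        refine le_trans (le_of_eq ?_) (qinf_add_le hb1 hb2)
        rw [WithTop.coe_eq_coe]; ring
      · -- G * (h - H) part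
        rw [coeff_mul]
        refine w_sum_le hw htop _ _ _ (fun x hx => ?_)
        rw [Finset.HasAntidiagonal.mem_antidiagonal] at hx
        rw [hw.map_mul]
        have hxb : x.2 ≤ jj := by omega
        have hb2 : ((M - Cg : ℚ):Qinf) ≤ vK ((h - H).coeff x.2) := by
          have := hN3 n hnN3 x.2 hxb
          rw [coeff_sub, hHc]
          exact this
        have hb1 := hGb x.1
        refine le_trans (le_of_eq ?_) (qinf_add_le hb1 hb2)
        rw [WithTop.coe_eq_coe]; ring
    have hz : p - G*H = 0 := by
      ext jj
      rw [hkey jj, coeff_zero]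
    have := sub_eq_zero.1 hz
    exact this
  refine ⟨G, H, hfact, ?_, ?_, ?_, ?_⟩
  · rw [hGc, hglim_one]
  · intro j hj; rw [hGc, hglim_zero j hj]
  · rw [hHc, hhlim_one]
  · intro j hj; rw [hHc, hhlim_zero j hj]

end MLAux
end Part5

section Part6
namespace MLAux
open Polynomial

variable {K : Type*} [Field K]
variable {vK : K → Qinf} (hw : IsPseudoVal vK) (htop : ∀ a : K, vK a = ⊤ ↔ a = 0)

include hw htop in
/-- The Newton polygon of a monic irreducible polynomial over a complete field
is a straight line. -/
lemma newton_poly (hcompl : IsCompleteVal vK) {p : Polynomial K} (hp : p.Monic)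
    (hirr : Irreducible p) {m0 : ℚ} (h0 : vK (p.coeff 0) = ((m0:ℚ):Qinf)) :
    ∀ i : ℕ, i ≤ p.natDegree →
      (((((p.natDegree:ℚ) - (i:ℚ)) * m0 / (p.natDegree:ℚ)) : ℚ):Qinf) ≤ vK (p.coeff i) := by
  set d := p.natDegree with hd
  have htop0 : vK 0 = ⊤ := (htop 0).2 rfl
  have hd1 : 1 ≤ d := by
    by_contra hc
    push_neg at hc
    interval_cases d
    · exact hirr.not_isUnit (hp.natDegree_eq_zero.1 hd.symm ▸ isUnit_one)
  have hdQ : (0:ℚ) < (d:ℚ) := by exact_mod_cast hd1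
  have hc00 : p.coeff 0 ≠ 0 := by
    intro h
    rw [h, htop0] at h0
    exact WithTop.top_ne_coe h0
  by_contra hcon
  push_neg at hcon
  obtain ⟨i₀, hi₀d, hi₀⟩ := hcon
  -- rational values of the valuations of the coefficients
  set hq : ℕ → ℚ := fun i => (vK (p.coeff i)).untopD 0 with hqdef
  have hqI : ∀ i, p.coeff i ≠ 0 → vK (p.coeff i) = ((hq i : ℚ):Qinf) := by
    intro i hi
    have hne : vK (p.coeff i) ≠ ⊤ := fun h => hi ((htop _).1 h)
    rcases WithTop.ne_top_iff_exists.1 hne with ⟨q, hq'⟩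
    rw [← hq', hqdef]
    simp [← hq']
  have hq0 : hq 0 = m0 := by rw [hqdef]; simp [h0]
  have hcd : p.coeff d = 1 := hp.coeff_natDegree
  have hqd : hq d = 0 := by
    rw [hqdef]
    simp [hcd, w_one hw htop]
  set I : Finset ℕ := (Finset.range (d+1)).filter (fun i => p.coeff i ≠ 0) with hIdef
  have h0I : 0 ∈ I := by
    rw [hIdef, Finset.mem_filter, Finset.mem_range]
    exact ⟨by omega, hc00⟩
  have hdI : d ∈ I := by
    rw [hIdef, Finset.mem_filter, Finset.mem_range]
    exact ⟨by omega, by rw [hcd]; exact one_ne_zero⟩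
  have hdI' : d ∈ I.erase 0 := Finset.mem_erase.2 ⟨by omega, hdI⟩
  have hIne : (I.erase 0).Nonempty := ⟨d, hdI'⟩
  have hslne : ((I.erase 0).image (fun j => (hq 0 - hq j)/(j:ℚ))).Nonempty := hIne.image _
  set t1 := ((I.erase 0).image (fun j => (hq 0 - hq j)/(j:ℚ))).max' hslne with ht1def
  have ht1 : ∀ j ∈ I, j ≠ 0 → hq 0 ≤ hq j + t1 * (j:ℚ) := by
    intro j hj hj0
    have hmem : (hq 0 - hq j)/(j:ℚ) ∈ (I.erase 0).image (fun j => (hq 0 - hq j)/(j:ℚ)) :=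
      Finset.mem_image_of_mem _ (Finset.mem_erase.2 ⟨hj0, hj⟩)
    have hle := Finset.le_max' _ _ hmem
    have hjQ : (0:ℚ) < (j:ℚ) := by
      have : 0 < j := Nat.pos_of_ne_zero hj0
      exact_mod_cast this
    rw [← ht1def] at hle
    rw [div_le_iff₀ hjQ] at hle
    linarith
  have ht1mem : ∃ j ∈ I.erase 0, t1 = (hq 0 - hq j)/(j:ℚ) := by
    rcases Finset.mem_image.1 (Finset.max'_mem _ hslne) with ⟨j, hj, hj'⟩
    exact ⟨j, hj, by rw [ht1def, ← hj']⟩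
  set M := (I.erase 0).filter (fun j => hq j + t1 * (j:ℚ) = hq 0) with hMdef
  have hMne : M.Nonempty := by
    obtain ⟨j, hj, hj'⟩ := ht1mem
    have hj0 : j ≠ 0 := (Finset.mem_erase.1 hj).1
    have hjQ : (0:ℚ) < (j:ℚ) := by
      have : 0 < j := Nat.pos_of_ne_zero hj0
      exact_mod_cast this
    refine ⟨j, Finset.mem_filter.2 ⟨hj, ?_⟩⟩
    rw [hj']
    field_simp
    ring
  set k := M.max' hMne with hkdef
  have hkM : k ∈ M := M.max'_mem hMne
  have hkI : k ∈ I := (Finset.mem_erase.1 (Finset.mem_filter.1 hkM).1).2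
  have hk0 : k ≠ 0 := (Finset.mem_erase.1 (Finset.mem_filter.1 hkM).1).1
  have hkeq : hq k + t1 * (k:ℚ) = hq 0 := (Finset.mem_filter.1 hkM).2
  have hkled : k ≤ d := by
    have := (Finset.mem_filter.1 hkI).1
    rw [Finset.mem_range] at this
    omega
  have hck : p.coeff k ≠ 0 := (Finset.mem_filter.1 hkI).2
  -- k ≠ d, else the polygon is straight, contradicting the bad index i₀
  have hkd : k < d := by
    rcases lt_or_eq_of_le hkled with h | h
    · exact h
    exfalso
    have hkeq' : hq d + t1 * (d:ℚ) = hq 0 := h ▸ hkeq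
    have ht1v : t1 = m0/(d:ℚ) := by
      rw [hqd, hq0] at hkeq'
      field_simp at hkeq' ⊢
      linarith
    -- now every coefficient is above the line, contradicting hi₀
    have hi0ne : p.coeff i₀ ≠ 0 := by
      intro hz
      rw [hz, htop0] at hi₀
      exact (not_top_lt) hi₀
    have hi0I : i₀ ∈ I := by
      rw [hIdef, Finset.mem_filter, Finset.mem_range]
      exact ⟨by omega, hi0ne⟩
    rw [hqI i₀ hi0ne] at hi₀
    rw [WithTop.coe_lt_coe] at hi₀
    by_cases hiz : i₀ = 0
    · rw [hiz, hq0] at hi₀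
      have heq1 : ((d:ℚ) - ((0:ℕ):ℚ)) * m0 / (d:ℚ) = m0 := by
        push_cast
        field_simp
        ring
      rw [heq1] at hi₀
      exact lt_irrefl _ hi₀
    · have := ht1 i₀ hi0I hiz
      rw [ht1v, hq0] at this
      have hiQ : (i₀:ℚ) ≤ (d:ℚ) := by exact_mod_cast hi₀d
      rw [lt_div_iff₀ hdQ] at hi₀
      have h2 : ((d:ℚ) - i₀) * m0 = m0 * d - m0/(d:ℚ) * i₀ * d := by
        field_simp
      nlinarith
  -- the gap ε₂
  have hIfne : (I.filter (fun j => k < j)).Nonempty := ⟨d, Finset.mem_filter.2 ⟨hdI, hkd⟩⟩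
  have hgne : ((I.filter (fun j => k < j)).image
      (fun j => (hq j + t1 * (j:ℚ) - hq 0)/((j:ℚ) - (k:ℚ)))).Nonempty := hIfne.image _
  set ε2 := ((I.filter (fun j => k < j)).image
      (fun j => (hq j + t1 * (j:ℚ) - hq 0)/((j:ℚ) - (k:ℚ)))).min' hgne with hε2def
  have hjgap : ∀ j ∈ I, k < j → 0 < hq j + t1 * (j:ℚ) - hq 0 := by
    intro j hj hjk
    have hj0 : j ≠ 0 := by omega
    have h1 := ht1 j hj hj0
    rcases lt_or_eq_of_le h1 with h | h
    · linarith
    · exfalso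
      have hjM : j ∈ M := Finset.mem_filter.2 ⟨Finset.mem_erase.2 ⟨hj0, hj⟩, h.symm⟩
      have := Finset.le_max' M j hjM
      omega
  have hε2pos : 0 < ε2 := by
    rw [hε2def, Finset.lt_min'_iff]
    intro y hy
    rcases Finset.mem_image.1 hy with ⟨j, hj, hj'⟩
    rcases Finset.mem_filter.1 hj with ⟨hjI, hjk⟩
    rw [← hj']
    apply div_pos (hjgap j hjI hjk)
    have : (k:ℚ) < (j:ℚ) := by exact_mod_cast hjk
    linarith
  have hε2min : ∀ j ∈ I, k < j → ε2 * ((j:ℚ) - (k:ℚ)) ≤ hq j + t1 * (j:ℚ) - hq 0 := by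
    intro j hj hjk
    have hmem : (hq j + t1 * (j:ℚ) - hq 0)/((j:ℚ) - (k:ℚ)) ∈ (I.filter (fun j => k < j)).image
        (fun j => (hq j + t1 * (j:ℚ) - hq 0)/((j:ℚ) - (k:ℚ))) :=
      Finset.mem_image_of_mem _ (Finset.mem_filter.2 ⟨hj, hjk⟩)
    have hle := Finset.min'_le _ _ hmem
    rw [← hε2def] at hle
    have hjkQ : (0:ℚ) < (j:ℚ) - (k:ℚ) := by
      have : (k:ℚ) < (j:ℚ) := by exact_mod_cast hjk
      linarith
    rw [le_div_iff₀ hjkQ] at hle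
    linarith
  -- the vertex data
  set t := t1 - ε2/2 with htdef
  set A := hq k + t * (k:ℚ) with hAdef
  have hckv : vK (p.coeff k) = ((A - t*(k:ℚ) : ℚ):Qinf) := by
    rw [hqI k hck, WithTop.coe_eq_coe, hAdef]
    ring
  have hvertex : ∀ i : ℕ, i ≠ k → ((A + ε2/2 - t*(i:ℚ) : ℚ):Qinf) ≤ vK (p.coeff i) := by
    intro i hik
    by_cases hiz : p.coeff i = 0
    · rw [hiz, htop0]; exact le_top
    have hiI : i ∈ I := by
      rw [hIdef, Finset.mem_filter, Finset.mem_range]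
      refine ⟨?_, hiz⟩
      by_contra hgt
      exact hiz (coeff_eq_zero_of_natDegree_lt (by omega))
    rw [hqI i hiz, WithTop.coe_le_coe]
    rcases Nat.lt_or_ge i k with hlt | hge
    · -- i < k
      have h1 : hq 0 ≤ hq i + t1 * (i:ℚ) := by
        by_cases hi0 : i = 0
        · rw [hi0]; simp
        · exact ht1 i hiI hi0
      have hik1 : (i:ℚ) + 1 ≤ (k:ℚ) := by exact_mod_cast hlt
      rw [hAdef, htdef]
      nlinarith
    · -- i > k
      have hgt : k < i := by omega
      have h2 := hε2min i hiI hgt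
      have hik1 : (k:ℚ) + 1 ≤ (i:ℚ) := by exact_mod_cast hgt
      rw [hAdef, htdef]
      nlinarith [hkeq]
  -- Hensel factorization gives a contradiction with irreducibility
  obtain ⟨G, H, hfact, hG1, hG0, hH1, hH0⟩ :=
    hensel_factor hw htop hcompl hp (half_pos hε2pos) hkd hckv hvertex
  rcases hirr.isUnit_or_isUnit hfact with hu | hu
  · rcases Polynomial.isUnit_iff.1 hu with ⟨c, _, hc⟩
    rw [← hc, coeff_C, if_neg (by omega : ¬ (d - k = 0))] at hG1
    exact one_ne_zero hG1.symm
  · rcases Polynomial.isUnit_iff.1 hu with ⟨c, _, hc⟩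
    rw [← hc, coeff_C, if_neg (by omega : ¬ (k = 0))] at hH1
    exact one_ne_zero hH1.symm

end MLAux
end Part6

section Part7
namespace MLAux
open Polynomial

variable {K : Type*} [Field K] {Kb : Type*} [Field Kb] [Algebra K Kb]
variable {vK : K → Qinf} (hw : IsPseudoVal vK) (htop : ∀ a : K, vK a = ⊤ ↔ a = 0)
variable {vbar : Kb → Qinf} (hvb : IsPseudoVal vbar)
  (hvtop : ∀ a : Kb, vbar a = ⊤ ↔ a = 0)
  (hext : ∀ a : K, vbar (algebraMap K Kb a) = vK a)

include hw htop hvb hvtop hext in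
/-- Every root (in `Kb`) of a monic irreducible polynomial over the complete field `K`
has valuation `(v (p 0)) / deg p`. -/
lemma root_val (hcompl : IsCompleteVal vK) {p : Polynomial K} (hp : p.Monic)
    (hirr : Irreducible p) {β : Kb} (hroot : Polynomial.aeval β p = 0)
    {b m0 : ℚ} (hb : vbar β = ((b:ℚ):Qinf)) (h0 : vK (p.coeff 0) = ((m0:ℚ):Qinf)) :
    b = m0 / (p.natDegree:ℚ) := by
  set d := p.natDegree with hd
  have hd1 : 1 ≤ d := by
    by_contra hc
    push_neg at hc
    interval_cases d
    · exact hirr.not_isUnit (hp.natDegree_eq_zero.1 hd.symm ▸ isUnit_one)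
  have hdQ : (0:ℚ) < (d:ℚ) := by exact_mod_cast hd1
  have NP := newton_poly hw htop hcompl hp hirr h0
  -- valuation of each term of the aeval sum
  have hterm : ∀ i : ℕ, i ≤ d →
      (((((d:ℚ) - (i:ℚ)) * m0 / (d:ℚ) + (i:ℚ)*b) : ℚ):Qinf) ≤ vbar (p.coeff i • β ^ i) := by
    intro i hi
    rw [Algebra.smul_def, hvb.map_mul, hext]
    exact qinf_add_le (NP i hi) (le_of_eq (w_pow hvb hvtop hb i).symm)
  rcases lt_trichotomy b (m0/(d:ℚ)) with hlt | heq | hgt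
  · -- b < m0/d : impossible
    exfalso
    have hsum : Polynomial.aeval β p = (∑ i ∈ Finset.range d, p.coeff i • β ^ i) + β ^ d := by
      rw [Polynomial.aeval_eq_sum_range, Finset.sum_range_succ, hp.coeff_natDegree, one_smul]
    have hv1 : vbar (β ^ d) = (((d:ℚ)*b : ℚ):Qinf) := w_pow hvb hvtop hb d
    have hv2 : ((((d:ℚ)*b + (m0/(d:ℚ) - b)) : ℚ):Qinf) ≤
        vbar (∑ i ∈ Finset.range d, p.coeff i • β ^ i) := by
      refine w_sum_le hvb hvtop _ _ _ (fun i hi => ?_)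
      rw [Finset.mem_range] at hi
      refine le_trans ?_ (hterm i (by omega))
      rw [WithTop.coe_le_coe]
      have hiQ : (i:ℚ) + 1 ≤ (d:ℚ) := by exact_mod_cast hi
      have h1 : ((d:ℚ) - (i:ℚ)) * m0 / (d:ℚ) + (i:ℚ)*b - ((d:ℚ)*b + (m0/(d:ℚ) - b)) =
          ((d:ℚ) - (i:ℚ) - 1) * (m0/(d:ℚ) - b) := by
        field_simp
        ring
      nlinarith
    have hlt' : vbar (β ^ d) < vbar (∑ i ∈ Finset.range d, p.coeff i • β ^ i) := by
      refine lt_of_lt_of_le ?_ hv2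
      rw [hv1, WithTop.coe_lt_coe]
      linarith
    have hfin : vbar (Polynomial.aeval β p) = (((d:ℚ)*b : ℚ):Qinf) := by
      rw [hsum, add_comm, w_add_eq_of_lt hvb hvtop hlt', hv1]
    rw [hroot, (hvtop 0).2 rfl] at hfin
    exact WithTop.top_ne_coe hfin
  · exact heq
  · -- b > m0/d : impossible
    exfalso
    have hsum0 : (0:Kb) = (∑ i ∈ Finset.range d, p.coeff (i+1) • β ^ (i+1)) +
        p.coeff 0 • β ^ 0 := by
      rw [← hroot, Polynomial.aeval_eq_sum_range, Finset.sum_range_succ']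
    have halg : algebraMap K Kb (p.coeff 0) =
        -(∑ i ∈ Finset.range d, p.coeff (i+1) • β ^ (i+1)) := by
      have := hsum0
      rw [pow_zero, Algebra.smul_def, mul_one] at this
      linear_combination -this
    have hv3 : (((m0 + (b - m0/(d:ℚ))) : ℚ):Qinf) ≤
        vbar (∑ i ∈ Finset.range d, p.coeff (i+1) • β ^ (i+1)) := by
      refine w_sum_le hvb hvtop _ _ _ (fun i hi => ?_)
      rw [Finset.mem_range] at hi
      refine le_trans ?_ (hterm (i+1) (by omega))
      rw [WithTop.coe_le_coe]
      have hiQ : ((i:ℚ) + 1) ≤ (d:ℚ) := by exact_mod_cast hi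
      have h1 : ((d:ℚ) - ((i+1:ℕ):ℚ)) * m0 / (d:ℚ) + ((i+1:ℕ):ℚ)*b -
          (m0 + (b - m0/(d:ℚ))) = (((i+1:ℕ):ℚ) - 1) * (b - m0/(d:ℚ)) := by
        push_cast
        field_simp
        ring
      push_cast at h1 ⊢
      nlinarith
    have hv4 : vK (p.coeff 0) = vbar (-(∑ i ∈ Finset.range d, p.coeff (i+1) • β ^ (i+1))) := by
      rw [← halg, hext]
    rw [w_neg hvb hvtop, h0] at hv4
    rw [← hv4] at hv3
    rw [WithTop.coe_le_coe] at hv3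
    linarith

end MLAux
end Part7

section Part8
namespace MLAux
open Polynomial

variable {K : Type*} [Field K] {Kb : Type*} [Field Kb] [Algebra K Kb]
variable {vK : K → Qinf} (hw : IsPseudoVal vK) (htop : ∀ a : K, vK a = ⊤ ↔ a = 0)
variable {vbar : Kb → Qinf} (hvb : IsPseudoVal vbar)
  (hvtop : ∀ a : Kb, vbar a = ⊤ ↔ a = 0)
  (hext : ∀ a : K, vbar (algebraMap K Kb a) = vK a)

include hw htop hvb hvtop hext in
lemma root_minpoly_val [Algebra.IsAlgebraic K Kb] (hcompl : IsCompleteVal vK)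
    (y₀ y : Kb) (hroot : Polynomial.aeval y (minpoly K y₀) = 0) :
    vbar y = vbar y₀ := by
  have hy₀int : IsIntegral K y₀ := (Algebra.IsAlgebraic.isAlgebraic y₀).isIntegral
  by_cases hz : y₀ = 0
  · subst hz
    rw [minpoly.zero, Polynomial.aeval_X] at hroot
    rw [hroot]
  · have hm_monic : (minpoly K y₀).Monic := minpoly.monic hy₀int
    have hm_irr : Irreducible (minpoly K y₀) := minpoly.irreducible hy₀int
    have hc0 : (minpoly K y₀).coeff 0 ≠ 0 := minpoly.coeff_zero_ne_zero hy₀int hz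
    have hm0 : ∃ m0 : ℚ, vK ((minpoly K y₀).coeff 0) = ((m0:ℚ):Qinf) := by
      have hne : vK ((minpoly K y₀).coeff 0) ≠ ⊤ := fun h => hc0 ((htop _).1 h)
      rcases WithTop.ne_top_iff_exists.1 hne with ⟨q, hq⟩
      exact ⟨q, hq.symm⟩
    obtain ⟨m0, hm0⟩ := hm0
    have hy : y ≠ 0 := by
      intro h
      rw [h, Polynomial.aeval_def, Polynomial.eval₂_at_zero] at hroot
      exact hc0 ((_root_.map_eq_zero (algebraMap K Kb)).1 hroot)
    have hb₀ : ∃ b : ℚ, vbar y₀ = ((b:ℚ):Qinf) := by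
      have hne : vbar y₀ ≠ ⊤ := fun h => hz ((hvtop _).1 h)
      rcases WithTop.ne_top_iff_exists.1 hne with ⟨q, hq⟩; exact ⟨q, hq.symm⟩
    have hb₁ : ∃ b : ℚ, vbar y = ((b:ℚ):Qinf) := by
      have hne : vbar y ≠ ⊤ := fun h => hy ((hvtop _).1 h)
      rcases WithTop.ne_top_iff_exists.1 hne with ⟨q, hq⟩; exact ⟨q, hq.symm⟩
    obtain ⟨b₀, hb₀⟩ := hb₀
    obtain ⟨b₁, hb₁⟩ := hb₁
    have h1 : b₀ = m0 / ((minpoly K y₀).natDegree:ℚ) :=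
      root_val hw htop hvb hvtop hext hcompl hm_monic hm_irr (minpoly.aeval K y₀) hb₀ hm0
    have h2 : b₁ = m0 / ((minpoly K y₀).natDegree:ℚ) :=
      root_val hw htop hvb hvtop hext hcompl hm_monic hm_irr hroot hb₁ hm0
    rw [hb₀, hb₁, h1, h2]

include hw htop hvb hvtop hext in
/-- Conjugate elements of `Kb` have the same valuation; in the form needed:
evaluations of `g` at two roots of the same irreducible polynomial. -/
lemma conj_aeval_val [Algebra.IsAlgebraic K Kb] (hcompl : IsCompleteVal vK)
    {F : Polynomial K} (hF : Irreducible F) {r₀ r : Kb}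
    (h₀ : Polynomial.aeval r₀ F = 0) (h : Polynomial.aeval r F = 0) (g : Polynomial K) :
    vbar (Polynomial.aeval r g) = vbar (Polynomial.aeval r₀ g) := by
  haveI : Fact (Irreducible F) := ⟨hF⟩
  set ψ₀ := AdjoinRoot.liftAlgHom F (Algebra.ofId K Kb) r₀ (by rw [← h₀, Polynomial.aeval_def]; rfl) with hψ₀
  set ψ := AdjoinRoot.liftAlgHom F (Algebra.ofId K Kb) r (by rw [← h, Polynomial.aeval_def]; rfl) with hψ
  set z := Polynomial.aeval (AdjoinRoot.root F) g with hzdef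
  have hz₀ : ψ₀ z = Polynomial.aeval r₀ g := by
    rw [hzdef, ← Polynomial.aeval_algHom_apply, hψ₀, AdjoinRoot.liftAlgHom_root]
  have hz₁ : ψ z = Polynomial.aeval r g := by
    rw [hzdef, ← Polynomial.aeval_algHom_apply, hψ, AdjoinRoot.liftAlgHom_root]
  set m := minpoly K (Polynomial.aeval r₀ g) with hm
  have hmz : Polynomial.aeval z m = 0 := by
    have h1 : ψ₀ (Polynomial.aeval z m) = 0 := by
      rw [← Polynomial.aeval_algHom_apply ψ₀ z m, hz₀]
      exact minpoly.aeval K _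
    exact (_root_.map_eq_zero ψ₀).1 h1
  have hroot : Polynomial.aeval (Polynomial.aeval r g) m = 0 := by
    rw [← hz₁, Polynomial.aeval_algHom_apply ψ z m, hmz, map_zero]
  exact root_minpoly_val hw htop hvb hvtop hext hcompl _ _ hroot

end MLAux
end Part8

end

/-- Lemma `lem:vs`.
Let `v` be a MacLane pseudo-valuation with `s = D_v ∩ R` nonempty.  Then `v ≤ v_s`
and `(s, v_s)` is a MacLane cluster for `f`. -/
theorem le_vs_and_vs_cluster
    {K : Type*} [Field K] {Kb : Type*} [Field Kb] [Algebra K Kb] [IsAlgClosure K Kb]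
    (vK : K → Qinf) (hK : IsNormDiscreteVal vK) (hcompl : IsCompleteVal vK)
    (vbar : Kb → Qinf) (hvbar : IsExtVal vK vbar)
    (f : Polynomial K) (hsep : f.Separable)
    (hfint : ∀ i : ℕ, 0 ≤ vK ((Polynomial.C f.leadingCoeff⁻¹ * f).coeff i))
    (v : Polynomial K → Qinf) (hv : IsMacLane vK v)
    (s : Set Kb) (hs : s = Dset vbar v ∩ rootSetOf f) (hne : s.Nonempty)
    (vs : Polynomial K → Qinf) (hvs : IsVsOf vK vbar s vs) :
    v ≤ vs ∧ IsMLCluster vK vbar f s vs    := by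
  obtain ⟨hvsML, hvsle, hvsmax⟩ := hvs
  have hwp := hK.pseudo
  have hwtop := hK.top_iff
  have hvbp := hvbar.pseudo
  have hvbtop := hvbar.top_iff
  have hvbext := hvbar.extends_vK
  haveI : Algebra.IsAlgebraic K Kb := IsAlgClosure.isAlgebraic
  -- Any pseudo-valuation dominating evaluation at all points of `s` satisfies the
  -- `v_F`-bound, by Galois invariance of `vbar` (uniqueness of the extension).
  have key : ∀ u : Polynomial K → Qinf,
      (∀ α ∈ s, ∀ g : Polynomial K, u g ≤ vbar (Polynomial.aeval α g)) →
      (∀ F : Polynomial K, F.Monic → Irreducible F →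
        (∃ r ∈ s, Polynomial.aeval r F = 0) →
        ∀ (g : Polynomial K) (r : Kb), Polynomial.aeval r F = 0 →
          u g ≤ vbar (Polynomial.aeval r g)) := by
    intro u hu F _ hFirr hex g r hr
    obtain ⟨r₀, hr₀s, hr₀⟩ := hex
    have hconj := MLAux.conj_aeval_val hwp hwtop hvbp hvbtop hvbext hcompl hFirr hr₀ hr g
    rw [hconj]
    exact hu r₀ hr₀s g
  have hsDv : ∀ α ∈ s, ∀ g : Polynomial K, v g ≤ vbar (Polynomial.aeval α g) := by
    intro α hα g
    rw [hs] at hα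
    exact hα.1 g
  have hvle : v ≤ vs := hvsmax v hv (key v hsDv)
  refine ⟨hvle, hvsML, hne, ?_, ?_⟩
  · -- `s = D_{v_s} ∩ R`
    apply Set.Subset.antisymm
    · intro α hα
      have hαR : α ∈ rootSetOf f := by
        have h := hα
        rw [hs] at h
        exact h.2
      refine ⟨?_, hαR⟩
      intro g
      have hαint : IsIntegral K α := (Algebra.IsAlgebraic.isAlgebraic α).isIntegral
      exact hvsle (minpoly K α) (minpoly.monic hαint) (minpoly.irreducible hαint)
        ⟨α, hα, minpoly.aeval K α⟩ g α (minpoly.aeval K α)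
    · intro α hα
      rw [hs]
      exact ⟨fun g => le_trans (hvle g) (hα.1 g), hα.2⟩
  · -- maximality: no MacLane `w > v_s` cuts out the same `s`
    intro w hwML hlt hsw dv dw _ _
    exfalso
    have hsDw : ∀ α ∈ s, ∀ g : Polynomial K, w g ≤ vbar (Polynomial.aeval α g) := by
      intro α hα g
      rw [hsw] at hα
      exact hα.1 g
    exact absurd (hvsmax w hwML (key w hsDw)) hlt.not_ge
end
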